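/- arXiv:2407.09764 — 5 statements merged into one kernel-verified Lean document; each statement's English description precedes it below -/
import Mathlib

section
/- For every integer m ≥ 1 and every field F, the space of 2-coboundaries of the Heisenberg Lie algebra h_m with adjoint coefficients, i.e. the image of the map ψ ↦ d¹ψ from linear maps h_m → h_m to alternating bilinear maps, has dimension 2m² + m over F. -/
namespace HeisProof

variable {F : Type*} [Field F] {m : ℕ}
variable {L : Type*} [LieRing L] [LieAlgebra F L]

def i1 (i : Fin m) : Fin (2*m+1) := ⟨i.val, by omega⟩
def i2 (i : Fin m) : Fin (2*m+1) := ⟨i.val + m, by omega⟩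

/-- the symplectic-like form in coordinates -/
noncomputable def om (b : Module.Basis (Fin (2*m+1)) F L) : L →ₗ[F] L →ₗ[F] F :=
  LinearMap.mk₂ F
    (fun x y => ∑ i : Fin m,
      (b.repr x (i1 i) * b.repr y (i2 i) - b.repr x (i2 i) * b.repr y (i1 i)))
    (by intro x x' y
        simp only [map_add, Finsupp.add_apply]
        rw [← Finset.sum_add_distrib]
        exact Finset.sum_congr rfl fun i _ => by ring)
    (by intro c x y
        simp only [map_smul, Finsupp.smul_apply, smul_eq_mul, Finset.mul_sum]
        exact Finset.sum_congr rfl fun i _ => by ring)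
    (by intro x y y'
        simp only [map_add, Finsupp.add_apply]
        rw [← Finset.sum_add_distrib]
        exact Finset.sum_congr rfl fun i _ => by ring)
    (by intro c x y
        simp only [map_smul, Finsupp.smul_apply, smul_eq_mul, Finset.mul_sum]
        exact Finset.sum_congr rfl fun i _ => by ring)

lemma om_apply (b : Module.Basis (Fin (2*m+1)) F L) (x y : L) :
    om b x y = ∑ i : Fin m,
      (b.repr x (i1 i) * b.repr y (i2 i) - b.repr x (i2 i) * b.repr y (i1 i)) := rfl

lemma repr_basis (b : Module.Basis (Fin (2*m+1)) F L) (i j : Fin (2*m+1)) :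
    b.repr (b i) j = if i = j then 1 else 0 := by
  rw [b.repr_self, Finsupp.single_apply]

lemma om_swap (b : Module.Basis (Fin (2*m+1)) F L) (x y : L) : om b x y = - om b y x := by
  rw [om_apply, om_apply, ← Finset.sum_neg_distrib]
  exact Finset.sum_congr rfl fun i _ => by ring

lemma om_bk1 (b : Module.Basis (Fin (2*m+1)) F L) (x : L) (l : Fin m) :
    om b x (b (i1 l)) = - b.repr x (i2 l) := by
  rw [om_apply]
  rw [Finset.sum_eq_single l]
  · have h0 : ¬ (i1 l = i2 l) := by have := l.is_lt; simp [i1, i2, Fin.ext_iff]; omega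
    simp [repr_basis, h0]
  · intro l' _ hl'
    have h1 : ¬ (i1 l = i2 l') := by simp [i1, i2, Fin.ext_iff]; omega
    have h2 : ¬ (i1 l = i1 l') := by
      simp only [i1, Fin.ext_iff]; intro h; exact hl' (Fin.ext h.symm ▸ rfl)
    simp [repr_basis, h1, h2]
  · simp

lemma om_bk2 (b : Module.Basis (Fin (2*m+1)) F L) (x : L) (l : Fin m) :
    om b x (b (i2 l)) = b.repr x (i1 l) := by
  rw [om_apply]
  rw [Finset.sum_eq_single l]
  · have h0 : ¬ (i2 l = i1 l) := by have := l.is_lt; simp [i1, i2, Fin.ext_iff]; omega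
    simp [repr_basis, h0]
  · intro l' _ hl'
    have h1 : ¬ (i2 l = i1 l') := by simp [i1, i2, Fin.ext_iff]; omega
    have h2 : ¬ (i2 l = i2 l') := by
      simp only [i2, Fin.ext_iff]; intro h
      exact hl' (Fin.ext (by omega))
    simp [repr_basis, h1, h2]
  · simp

lemma om_bk3 (b : Module.Basis (Fin (2*m+1)) F L) (x : L) :
    om b x (b (Fin.last (2*m))) = 0 := by
  rw [om_apply]
  apply Finset.sum_eq_zero
  intro l _
  have h1 : ¬ (Fin.last (2*m) = i1 l) := by simp [i1, Fin.ext_iff]; omega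
  have h2 : ¬ (Fin.last (2*m) = i2 l) := by simp [i2, Fin.ext_iff]; omega
  simp [repr_basis, h1, h2]

end HeisProof

namespace HeisProof
variable {F : Type*} [Field F] {m : ℕ}
variable {L : Type*} [LieRing L] [LieAlgebra F L]

lemma om_basis (b : Module.Basis (Fin (2*m+1)) F L) (i j : Fin (2*m+1)) :
    om b (b i) (b j) =
      if (j : ℕ) = (i : ℕ) + m ∧ (i : ℕ) < m then 1
      else if (i : ℕ) = (j : ℕ) + m ∧ (j : ℕ) < m then (-1 : F) else 0 := by
  by_cases hj : (j : ℕ) < m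
  · have hj' : j = i1 ⟨j.val, hj⟩ := by simp [i1, Fin.ext_iff]
    conv_lhs => rw [hj']
    rw [om_bk1, repr_basis]
    simp only [i1, i2, Fin.ext_iff]
    split_ifs
    all_goals try rfl
    all_goals try ring
    all_goals exfalso
    all_goals omega
  · by_cases hj2 : (j : ℕ) < 2*m
    · have hl : (j : ℕ) - m < m := by omega
      have hj' : j = i2 ⟨(j : ℕ) - m, hl⟩ := by simp [i2, Fin.ext_iff]; omega
      conv_lhs => rw [hj']
      rw [om_bk2, repr_basis]
      simp only [i1, i2, Fin.ext_iff]
      split_ifs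
      all_goals try rfl
      all_goals try ring
      all_goals exfalso
      all_goals omega
    · have hj' : j = Fin.last (2*m) := by simp [Fin.ext_iff]; omega
      rw [hj', om_bk3]
      simp only [Fin.val_last]
      split_ifs <;> first | rfl | (exfalso; omega)

/-- the bracket in terms of `om` -/
lemma bracket_eq (b : Module.Basis (Fin (2*m+1)) F L)
    (hb : ∀ i j : Fin (2*m+1), ⁅b i, b j⁆ =
      if (j : ℕ) = (i : ℕ) + m ∧ (i : ℕ) < m then b (Fin.last (2*m))
      else if (i : ℕ) = (j : ℕ) + m ∧ (j : ℕ) < m then - b (Fin.last (2*m))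
      else 0)
    (x y : L) : ⁅x, y⁆ = om b x y • b (Fin.last (2*m)) := by
  let B1 : L →ₗ[F] L →ₗ[F] L := LinearMap.mk₂ F (fun x y : L => ⁅x, y⁆)
    add_lie smul_lie lie_add lie_smul
  let B2 : L →ₗ[F] L →ₗ[F] L := LinearMap.mk₂ F
    (fun x y : L => om b x y • b (Fin.last (2*m)))
    (by intro x x' y; simp only [map_add, LinearMap.add_apply, add_smul])
    (by intro c x y; simp only [map_smul, LinearMap.smul_apply, smul_assoc])
    (by intro x y y'; simp only [map_add, add_smul])
    (by intro c x y; simp only [map_smul, smul_assoc])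
  have key : B1 = B2 := by
    apply LinearMap.ext_basis b b
    intro i j
    show ⁅b i, b j⁆ = om b (b i) (b j) • b (Fin.last (2*m))
    rw [hb i j, om_basis]
    split_ifs <;> simp
  exact LinearMap.congr_fun₂ key x y

end HeisProof

namespace HeisProof
variable {F : Type*} [Field F] {m : ℕ}
variable {L : Type*} [LieRing L] [LieAlgebra F L]

/-- the coboundary operator, as a linear map into functions -/
noncomputable def Dmap : (L →ₗ[F] L) →ₗ[F] (L → L → L) where
  toFun ψ := fun x y => ⁅x, ψ y⁆ - ⁅y, ψ x⁆ - ψ ⁅x, y⁆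
  map_add' ψ ψ' := by
    funext x y
    simp only [LinearMap.add_apply, lie_add, Pi.add_apply]
    abel
  map_smul' c ψ := by
    funext x y
    simp only [LinearMap.smul_apply, lie_smul, RingHom.id_apply, Pi.smul_apply,
      smul_sub]

lemma B_eq_range (B : Submodule F (L → L → L))
    (hB : ∀ φ : L → L → L, φ ∈ B ↔
      ∃ ψ : L →ₗ[F] L, ∀ x y : L, φ x y = ⁅x, ψ y⁆ - ⁅y, ψ x⁆ - ψ ⁅x, y⁆) :
    B = LinearMap.range (Dmap (F := F) (L := L)) := by
  ext φ
  rw [hB, LinearMap.mem_range]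
  constructor
  · rintro ⟨ψ, h⟩
    exact ⟨ψ, by funext x y; exact (h x y).symm⟩
  · rintro ⟨ψ, h⟩
    exact ⟨ψ, fun x y => by rw [← h]; rfl⟩

/-- rank-one linear maps -/
noncomputable def ro (b : Module.Basis (Fin (2*m+1)) F L) (c k : Fin (2*m+1)) : L →ₗ[F] L :=
  (b.coord c).smulRight (b k)

lemma ro_apply (b : Module.Basis (Fin (2*m+1)) F L) (c k : Fin (2*m+1)) (y : L) :
    ro b c k y = b.repr y c • b k := rfl

/-- the master formula for `Dmap` -/
lemma Dmap_eq (b : Module.Basis (Fin (2*m+1)) F L)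
    (hb : ∀ i j : Fin (2*m+1), ⁅b i, b j⁆ =
      if (j : ℕ) = (i : ℕ) + m ∧ (i : ℕ) < m then b (Fin.last (2*m))
      else if (i : ℕ) = (j : ℕ) + m ∧ (j : ℕ) < m then - b (Fin.last (2*m))
      else 0)
    (ψ : L →ₗ[F] L) (x y : L) :
    Dmap ψ x y = (om b x (ψ y) - om b y (ψ x)) • b (Fin.last (2*m))
      - om b x y • ψ (b (Fin.last (2*m))) := by
  show ⁅x, ψ y⁆ - ⁅y, ψ x⁆ - ψ ⁅x, y⁆ = _
  rw [bracket_eq b hb x (ψ y), bracket_eq b hb y (ψ x), bracket_eq b hb x y,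
    map_smul, sub_smul]

lemma repr_last (b : Module.Basis (Fin (2*m+1)) F L) (c : Fin (2*m+1)) :
    b.repr (b (Fin.last (2*m))) c = if c = Fin.last (2*m) then 1 else 0 := by
  rw [repr_basis]
  split_ifs with h1 h2 h2 <;> first | rfl | (exfalso; exact h2 h1.symm) | (exfalso; exact h1 h2.symm)

/-- `Dmap` of a rank-one map -/
lemma Dmap_ro (b : Module.Basis (Fin (2*m+1)) F L)
    (hb : ∀ i j : Fin (2*m+1), ⁅b i, b j⁆ =
      if (j : ℕ) = (i : ℕ) + m ∧ (i : ℕ) < m then b (Fin.last (2*m))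
      else if (i : ℕ) = (j : ℕ) + m ∧ (j : ℕ) < m then - b (Fin.last (2*m))
      else 0)
    (c k : Fin (2*m+1)) (x y : L) :
    Dmap (ro b c k) x y =
      (b.repr y c * om b x (b k) - b.repr x c * om b y (b k)) • b (Fin.last (2*m))
      - om b x y • ((if c = Fin.last (2*m) then (1:F) else 0) • b k) := by
  rw [Dmap_eq b hb, ro_apply, ro_apply, ro_apply, map_smul, map_smul, repr_last]
  simp only [smul_eq_mul]

end HeisProof

namespace HeisProof
variable {F : Type*} [Field F] {m : ℕ}
variable {L : Type*} [LieRing L] [LieAlgebra F L]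

def vE (k : Fin (2*m)) : Fin (2*m+1) := ⟨k.val, by omega⟩

def cj (k : Fin (2*m)) : Fin (2*m+1) :=
  if h : k.val < m then i2 ⟨k.val, h⟩ else i1 ⟨k.val - m, by have := k.is_lt; omega⟩

def sgf (k : Fin (2*m)) : F := if k.val < m then 1 else -1

lemma sgf_sq (k : Fin (2*m)) : (sgf k : F) * sgf k = 1 := by
  unfold sgf; split_ifs <;> ring

lemma vE_ne_last (k : Fin (2*m)) : vE k ≠ Fin.last (2*m) := by
  have := k.is_lt; simp [vE, Fin.ext_iff]; omega

lemma i1_ne_last (l : Fin m) : (i1 l : Fin (2*m+1)) ≠ Fin.last (2*m) := by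
  have := l.is_lt; simp [i1, Fin.ext_iff]; omega

lemma i2_ne_last (l : Fin m) : (i2 l : Fin (2*m+1)) ≠ Fin.last (2*m) := by
  have := l.is_lt; simp [i2, Fin.ext_iff]; omega

lemma om_cj (b : Module.Basis (Fin (2*m+1)) F L) (x : L) (k : Fin (2*m)) :
    om b x (b (cj k)) = sgf k * b.repr x (vE k) := by
  unfold cj
  split_ifs with h
  · rw [om_bk2]
    have he : (i1 ⟨k.val, h⟩ : Fin (2*m+1)) = vE k := rfl
    rw [he]
    simp [sgf, h]
  · rw [om_bk1]
    have he : (i2 ⟨k.val - m, by have := k.is_lt; omega⟩ : Fin (2*m+1)) = vE k := by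
      have := k.is_lt
      apply Fin.ext; simp [i2, vE]; omega
    rw [he]
    simp [sgf, h]

end HeisProof

namespace HeisProof
variable {F : Type*} [Field F] {m : ℕ}
variable {L : Type*} [LieRing L] [LieAlgebra F L]

/-- strict pairs: `q.2 < q.1 < n` -/
abbrev TS (n : ℕ) := Σ j : Fin n, Fin j.val
/-- weak pairs: `q.2 ≤ q.1 < n` -/
abbrev TW (n : ℕ) := Σ j : Fin n, Fin (j.val + 1)

def qj (q : TS (2*m)) : Fin (2*m) := q.1
def qi (q : TS (2*m)) : Fin (2*m) := ⟨q.2.val, by have := q.2.is_lt; have := q.1.is_lt; omega⟩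

noncomputable def psi1 (b : Module.Basis (Fin (2*m+1)) F L) (q : TS (2*m)) : L →ₗ[F] L :=
  (sgf (qi q) : F) • ro b (vE (qj q)) (cj (qi q))

noncomputable def psi2 (b : Module.Basis (Fin (2*m+1)) F L) (k : Fin (2*m)) : L →ₗ[F] L :=
  ro b (Fin.last (2*m)) (cj k)

variable (b : Module.Basis (Fin (2*m+1)) F L)

lemma Dmap_psi1
    (hb : ∀ i j : Fin (2*m+1), ⁅b i, b j⁆ =
      if (j : ℕ) = (i : ℕ) + m ∧ (i : ℕ) < m then b (Fin.last (2*m))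
      else if (i : ℕ) = (j : ℕ) + m ∧ (j : ℕ) < m then - b (Fin.last (2*m))
      else 0)
    (q : TS (2*m)) (x y : L) :
    Dmap (psi1 b q) x y =
      (b.repr x (vE (qi q)) * b.repr y (vE (qj q))
        - b.repr x (vE (qj q)) * b.repr y (vE (qi q))) • b (Fin.last (2*m)) := by
  rw [psi1, map_smul]
  have h0 : (((sgf (qi q) : F) • Dmap (ro b (vE (qj q)) (cj (qi q)))) x y)
      = (sgf (qi q) : F) • (Dmap (ro b (vE (qj q)) (cj (qi q))) x y) := rfl
  rw [h0, Dmap_ro b hb, om_cj, om_cj, if_neg (vE_ne_last (qj q))]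
  rw [zero_smul, smul_zero, sub_zero, smul_smul]
  congr 1
  have hS := sgf_sq (F := F) (qi q)
  linear_combination (b.repr y (vE (qj q)) * b.repr x (vE (qi q))
    - b.repr x (vE (qj q)) * b.repr y (vE (qi q))) * hS

lemma Dmap_psi2
    (hb : ∀ i j : Fin (2*m+1), ⁅b i, b j⁆ =
      if (j : ℕ) = (i : ℕ) + m ∧ (i : ℕ) < m then b (Fin.last (2*m))
      else if (i : ℕ) = (j : ℕ) + m ∧ (j : ℕ) < m then - b (Fin.last (2*m))
      else 0)
    (k : Fin (2*m)) (x y : L) :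
    Dmap (psi2 b k) x y =
      ((sgf k : F) * (b.repr x (vE k) * b.repr y (Fin.last (2*m))
        - b.repr x (Fin.last (2*m)) * b.repr y (vE k))) • b (Fin.last (2*m))
      - om b x y • b (cj k) := by
  rw [psi2, Dmap_ro b hb, om_cj, om_cj, if_pos rfl, one_smul]
  congr 1
  ring

end HeisProof

namespace HeisProof
variable {F : Type*} [Field F] {m : ℕ}
variable {L : Type*} [LieRing L] [LieAlgebra F L]
variable (b : Module.Basis (Fin (2*m+1)) F L)

noncomputable def psiP (i j : Fin m) : L →ₗ[F] L :=
  ro b (i1 j) (i1 i) - ro b (i2 i) (i2 j)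

def wj (q : TW m) : Fin m := q.1
def wi (q : TW m) : Fin m := ⟨q.2.val, by have := q.2.is_lt; have := q.1.is_lt; omega⟩

noncomputable def psiQ (q : TW m) : L →ₗ[F] L :=
  if q.2.val = q.1.val then ro b (i2 (wj q)) (i1 (wi q))
  else ro b (i2 (wj q)) (i1 (wi q)) + ro b (i2 (wi q)) (i1 (wj q))

noncomputable def psiR (q : TW m) : L →ₗ[F] L :=
  if q.2.val = q.1.val then ro b (i1 (wj q)) (i2 (wi q))
  else ro b (i1 (wj q)) (i2 (wi q)) + ro b (i1 (wi q)) (i2 (wj q))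

noncomputable def psiT : L →ₗ[F] L :=
  (∑ i : Fin m, ro b (i1 i) (i1 i)) + ro b (Fin.last (2*m)) (Fin.last (2*m))

noncomputable def psiB (k : Fin (2*m)) : L →ₗ[F] L :=
  ro b (vE k) (Fin.last (2*m))

variable (hb : ∀ i j : Fin (2*m+1), ⁅b i, b j⁆ =
      if (j : ℕ) = (i : ℕ) + m ∧ (i : ℕ) < m then b (Fin.last (2*m))
      else if (i : ℕ) = (j : ℕ) + m ∧ (j : ℕ) < m then - b (Fin.last (2*m))
      else 0)

include hb

lemma psiP_zero (i j : Fin m) : Dmap (psiP b i j) = 0 := by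
  funext x y
  have h : Dmap (psiP b i j) x y
      = Dmap (ro b (i1 j) (i1 i)) x y - Dmap (ro b (i2 i) (i2 j)) x y := by
    rw [psiP, map_sub]; rfl
  rw [h, Dmap_ro b hb, Dmap_ro b hb, om_bk1, om_bk1, om_bk2, om_bk2,
    if_neg (i1_ne_last j), if_neg (i2_ne_last i)]
  simp only [zero_smul, smul_zero, sub_zero, Pi.zero_apply]
  rw [← sub_smul]
  apply smul_eq_zero_of_left
  ring

lemma psiQ_zero (q : TW m) : Dmap (psiQ b q) = 0 := by
  funext x y
  rw [psiQ]
  split_ifs with hd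
  · rw [Dmap_ro b hb, om_bk1, om_bk1, if_neg (i2_ne_last (wj q))]
    have hq : wi q = wj q := Fin.ext hd
    simp only [zero_smul, smul_zero, sub_zero, Pi.zero_apply, hq]
    apply smul_eq_zero_of_left
    ring
  · have h : Dmap (ro b (i2 (wj q)) (i1 (wi q)) + ro b (i2 (wi q)) (i1 (wj q))) x y
        = Dmap (ro b (i2 (wj q)) (i1 (wi q))) x y
          + Dmap (ro b (i2 (wi q)) (i1 (wj q))) x y := by
      rw [map_add]; rfl
    rw [h, Dmap_ro b hb, Dmap_ro b hb, om_bk1, om_bk1, om_bk1, om_bk1,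
      if_neg (i2_ne_last (wj q)), if_neg (i2_ne_last (wi q))]
    simp only [zero_smul, smul_zero, sub_zero, Pi.zero_apply]
    rw [← add_smul]
    apply smul_eq_zero_of_left
    ring

lemma psiR_zero (q : TW m) : Dmap (psiR b q) = 0 := by
  funext x y
  rw [psiR]
  split_ifs with hd
  · rw [Dmap_ro b hb, om_bk2, om_bk2, if_neg (i1_ne_last (wj q))]
    have hq : wi q = wj q := Fin.ext hd
    simp only [zero_smul, smul_zero, sub_zero, Pi.zero_apply, hq]
    apply smul_eq_zero_of_left
    ring
  · have h : Dmap (ro b (i1 (wj q)) (i2 (wi q)) + ro b (i1 (wi q)) (i2 (wj q))) x y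
        = Dmap (ro b (i1 (wj q)) (i2 (wi q))) x y
          + Dmap (ro b (i1 (wi q)) (i2 (wj q))) x y := by
      rw [map_add]; rfl
    rw [h, Dmap_ro b hb, Dmap_ro b hb, om_bk2, om_bk2, om_bk2, om_bk2,
      if_neg (i1_ne_last (wj q)), if_neg (i1_ne_last (wi q))]
    simp only [zero_smul, smul_zero, sub_zero, Pi.zero_apply]
    rw [← add_smul]
    apply smul_eq_zero_of_left
    ring

lemma psiB_zero (k : Fin (2*m)) : Dmap (psiB b k) = 0 := by
  funext x y
  rw [psiB, Dmap_ro b hb, om_bk3, om_bk3, if_neg (vE_ne_last k)]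
  simp only [zero_smul, smul_zero, mul_zero, sub_zero, Pi.zero_apply, sub_self]

lemma psiT_zero : Dmap (psiT b) = 0 := by
  funext x y
  have h : Dmap (psiT b) x y
      = (∑ i : Fin m, Dmap (ro b (i1 i) (i1 i)) x y)
        + Dmap (ro b (Fin.last (2*m)) (Fin.last (2*m))) x y := by
    rw [psiT, map_add, map_sum]
    simp [Finset.sum_apply]
  rw [h, Dmap_ro b hb, om_bk3, om_bk3, if_pos rfl, one_smul]
  have h2 : ∀ i : Fin m, Dmap (ro b (i1 i) (i1 i)) x y
      = (b.repr x (i1 i) * b.repr y (i2 i) - b.repr x (i2 i) * b.repr y (i1 i))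
        • b (Fin.last (2*m)) := by
    intro i
    rw [Dmap_ro b hb, om_bk1, om_bk1, if_neg (i1_ne_last i)]
    simp only [zero_smul, smul_zero, sub_zero]
    congr 1
    ring
  rw [Finset.sum_congr rfl (fun i _ => h2 i), ← Finset.sum_smul]
  simp only [mul_zero, zero_sub, zero_smul, Pi.zero_apply]
  rw [← om_apply]
  simp

end HeisProof

namespace HeisProof
variable {F : Type*} [Field F] {m : ℕ}
variable {L : Type*} [LieRing L] [LieAlgebra F L]
variable (b : Module.Basis (Fin (2*m+1)) F L)

lemma vE_inj {k k' : Fin (2*m)} (h : vE k = vE k') : k = k' := by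
  apply Fin.ext
  have := congrArg Fin.val h
  simpa [vE] using this

lemma TS_eq {q q₀ : TS (2*m)} (h1 : (qi q).val = (qi q₀).val)
    (h2 : (qj q).val = (qj q₀).val) : q = q₀ := by
  rcases q with ⟨⟨j, hj⟩, ⟨i, hi⟩⟩
  rcases q₀ with ⟨⟨j0, hj0⟩, ⟨i0, hi0⟩⟩
  dsimp [qi, qj] at h1 h2
  subst h2
  simp only [Sigma.mk.inj_iff, heq_eq_eq, Fin.mk.injEq]
  exact ⟨trivial, h1⟩

lemma repr_last_vE (k : Fin (2*m)) :
    b.repr (b (Fin.last (2*m))) (vE k) = 0 := by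
  rw [repr_basis, if_neg]
  exact fun h => vE_ne_last k h.symm

lemma repr_vE_last (k : Fin (2*m)) :
    b.repr (b (vE k)) (Fin.last (2*m)) = 0 := by
  rw [repr_basis, if_neg (vE_ne_last k)]

lemma repr_vE_vE (k k' : Fin (2*m)) :
    b.repr (b (vE k)) (vE k') = if k = k' then 1 else 0 := by
  rw [repr_basis]
  by_cases h : k = k'
  · simp [h]
  · rw [if_neg (fun hh => h (vE_inj hh)), if_neg h]

/-- parameter space for the lower bound -/
noncomputable def PsiW : ((TS (2*m) → F) × (Fin (2*m) → F)) →ₗ[F] (L →ₗ[F] L) :=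
  LinearMap.coprod (Fintype.linearCombination F (psi1 b))
    (Fintype.linearCombination F (psi2 b))

lemma PhiW_eval (A : TS (2*m) → F) (v : Fin (2*m) → F) (x y : L) :
    Dmap (PsiW b (A, v)) x y
      = (∑ q, A q • Dmap (psi1 b q) x y) + (∑ k, v k • Dmap (psi2 b k) x y) := by
  rw [PsiW, LinearMap.coprod_apply, map_add, Fintype.linearCombination_apply,
    Fintype.linearCombination_apply, map_sum, map_sum]
  simp only [map_smul]
  simp [Finset.sum_apply, Pi.add_apply, Pi.smul_apply]

end HeisProof

namespace HeisProof
variable {F : Type*} [Field F] {m : ℕ}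
variable {L : Type*} [LieRing L] [LieAlgebra F L]
variable (b : Module.Basis (Fin (2*m+1)) F L)

lemma sgf_ne (k : Fin (2*m)) : (sgf k : F) ≠ 0 := by
  unfold sgf; split_ifs
  · exact one_ne_zero
  · exact neg_ne_zero.mpr one_ne_zero

lemma qi_lt_qj (q : TS (2*m)) : (qi q).val < (qj q).val := q.2.is_lt

lemma PhiW_ker
    (hb : ∀ i j : Fin (2*m+1), ⁅b i, b j⁆ =
      if (j : ℕ) = (i : ℕ) + m ∧ (i : ℕ) < m then b (Fin.last (2*m))
      else if (i : ℕ) = (j : ℕ) + m ∧ (j : ℕ) < m then - b (Fin.last (2*m))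
      else 0)
    (A : TS (2*m) → F) (v : Fin (2*m) → F)
    (h : Dmap (PsiW b (A, v)) = 0) : A = 0 ∧ v = 0 := by
  have hv : v = 0 := by
    funext k₀
    have h1 : Dmap (PsiW b (A, v)) (b (vE k₀)) (b (Fin.last (2*m))) = 0 := by
      rw [h]; rfl
    rw [PhiW_eval b A v] at h1
    have e1 : ∀ q : TS (2*m),
        A q • Dmap (psi1 b q) (b (vE k₀)) (b (Fin.last (2*m))) = 0 := by
      intro q
      rw [Dmap_psi1 b hb, repr_last_vE, repr_last_vE]
      simp
    have e2 : (∑ k, v k • Dmap (psi2 b k) (b (vE k₀)) (b (Fin.last (2*m))))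
        = (v k₀ * sgf k₀) • b (Fin.last (2*m)) := by
      rw [Finset.sum_eq_single k₀]
      · rw [Dmap_psi2 b hb, om_bk3, repr_vE_vE, repr_vE_last, repr_basis,
          if_pos rfl, if_pos rfl]
        rw [zero_smul, sub_zero, smul_smul]
        congr 1
        ring
      · intro k _ hk
        rw [Dmap_psi2 b hb, om_bk3, repr_vE_vE, repr_vE_last,
          if_neg (fun hh => hk hh.symm)]
        simp
      · simp
    rw [Finset.sum_congr rfl (fun q _ => e1 q), e2] at h1
    simp only [Finset.sum_const_zero, zero_add] at h1
    rcases smul_eq_zero.mp h1 with h2 | h2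
    · rcases mul_eq_zero.mp h2 with h3 | h3
      · exact h3
      · exact absurd h3 (sgf_ne k₀)
    · exact absurd h2 (b.ne_zero _)
  subst hv
  refine ⟨?_, rfl⟩
  funext q₀
  have h1 : Dmap (PsiW b (A, 0)) (b (vE (qi q₀))) (b (vE (qj q₀))) = 0 := by
    rw [h]; rfl
  rw [PhiW_eval b A 0] at h1
  have e2 : ∀ k : Fin (2*m),
      (0 : Fin (2*m) → F) k • Dmap (psi2 b k) (b (vE (qi q₀))) (b (vE (qj q₀))) = 0 := by
    intro k; simp
  have e1 : (∑ q, A q • Dmap (psi1 b q) (b (vE (qi q₀))) (b (vE (qj q₀))))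
      = A q₀ • b (Fin.last (2*m)) := by
    rw [Finset.sum_eq_single q₀]
    · rw [Dmap_psi1 b hb, repr_vE_vE, repr_vE_vE, repr_vE_vE, repr_vE_vE]
      have hne : ¬ (qi q₀ = qj q₀) := by
        have := qi_lt_qj q₀
        intro hh; rw [hh] at this; omega
      rw [if_pos rfl, if_pos rfl, if_neg hne, if_neg (fun hh => hne hh.symm)]
      rw [smul_smul]
      congr 1
      ring
    · intro q _ hne
      rw [Dmap_psi1 b hb, repr_vE_vE, repr_vE_vE, repr_vE_vE, repr_vE_vE]
      have hA : ¬((qi q₀ = qi q) ∧ (qj q₀ = qj q)) := by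
        rintro ⟨u1, u2⟩
        exact hne (TS_eq (congrArg Fin.val u1).symm (congrArg Fin.val u2).symm)
      have hB : ¬((qi q₀ = qj q) ∧ (qj q₀ = qi q)) := by
        rintro ⟨u1, u2⟩
        have w1 := congrArg Fin.val u1
        have w2 := congrArg Fin.val u2
        have l1 := qi_lt_qj q
        have l2 := qi_lt_qj q₀
        omega
      have hz : (if qi q₀ = qi q then (1:F) else 0) * (if qj q₀ = qj q then (1:F) else 0)
          - (if qi q₀ = qj q then (1:F) else 0) * (if qj q₀ = qi q then (1:F) else 0) = 0 := by
        split_ifs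
        all_goals try ring
        all_goals exfalso
        all_goals
          first
            | exact hA ⟨by assumption, by assumption⟩
            | exact hB ⟨by assumption, by assumption⟩
      rw [hz, zero_smul, smul_zero]
    · simp
  rw [Finset.sum_congr rfl (fun k _ => e2 k), e1] at h1
  simp only [Finset.sum_const_zero, add_zero] at h1
  rcases smul_eq_zero.mp h1 with h2 | h2
  · exact h2
  · exact absurd h2 (b.ne_zero _)

end HeisProof

namespace HeisProof
variable {F : Type*} [Field F] {m : ℕ}
variable {L : Type*} [LieRing L] [LieAlgebra F L]
variable (b : Module.Basis (Fin (2*m+1)) F L)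

lemma i1_eq_i1 {a c : Fin m} : (i1 a : Fin (2*m+1)) = i1 c ↔ a = c := by
  constructor
  · intro h
    exact Fin.ext (by simpa [i1] using congrArg Fin.val h)
  · intro h; rw [h]

lemma i2_eq_i2 {a c : Fin m} : (i2 a : Fin (2*m+1)) = i2 c ↔ a = c := by
  constructor
  · intro h
    have := congrArg Fin.val h
    simp only [i2] at this
    exact Fin.ext (by omega)
  · intro h; rw [h]

lemma i1_ne_i2 (a c : Fin m) : (i1 a : Fin (2*m+1)) ≠ i2 c := by
  have := a.is_lt
  simp [i1, i2, Fin.ext_iff]; omega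

lemma i2_ne_i1 (a c : Fin m) : (i2 a : Fin (2*m+1)) ≠ i1 c := by
  have := c.is_lt
  simp [i1, i2, Fin.ext_iff]; omega

lemma ro_coord (c' k c r : Fin (2*m+1)) :
    b.repr (ro b c' k (b c)) r
      = (if c = c' then (1:F) else 0) * (if k = r then (1:F) else 0) := by
  rw [ro_apply, map_smul]
  simp only [Finsupp.smul_apply, repr_basis, smul_eq_mul]

lemma wi_le_wj (q : TW m) : (wi q).val ≤ (wj q).val := by
  have := q.2.is_lt
  simp only [wi, wj]
  omega

lemma TW_eq {q q₀ : TW m} (h1 : (wi q).val = (wi q₀).val)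
    (h2 : (wj q).val = (wj q₀).val) : q = q₀ := by
  rcases q with ⟨⟨j, hj⟩, ⟨i, hi⟩⟩
  rcases q₀ with ⟨⟨j0, hj0⟩, ⟨i0, hi0⟩⟩
  dsimp [wi, wj] at h1 h2
  subst h2
  simp only [Sigma.mk.inj_iff, heq_eq_eq, Fin.mk.injEq]
  exact ⟨trivial, h1⟩

lemma Q_coord (q q₀ : TW m) :
    b.repr (psiQ b q (b (i2 (wj q₀)))) (i1 (wi q₀)) = if q = q₀ then 1 else 0 := by
  have key : (if (i2 (wj q₀) : Fin (2*m+1)) = i2 (wj q) then (1:F) else 0)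
      * (if (i1 (wi q) : Fin (2*m+1)) = i1 (wi q₀) then (1:F) else 0)
      = if q = q₀ then 1 else 0 := by
    by_cases hq : q = q₀
    · subst hq; rw [if_pos rfl, if_pos rfl, if_pos rfl]; ring
    · have hne : ¬((i2 (wj q₀) : Fin (2*m+1)) = i2 (wj q)
          ∧ (i1 (wi q) : Fin (2*m+1)) = i1 (wi q₀)) := by
        rintro ⟨u1, u2⟩
        exact hq (TW_eq (congrArg Fin.val (i1_eq_i1.mp u2))
          (congrArg Fin.val (i2_eq_i2.mp u1)).symm)
      rw [if_neg hq]
      by_cases e1 : (i2 (wj q₀) : Fin (2*m+1)) = i2 (wj q)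
      · rw [if_neg (fun e2 => hne ⟨e1, e2⟩)]; ring
      · rw [if_neg e1]; ring
  by_cases hd : q.2.val = q.1.val
  · rw [psiQ, if_pos hd, ro_coord, key]
  · rw [psiQ, if_neg hd]
    have hsplit : b.repr ((ro b (i2 (wj q)) (i1 (wi q))
        + ro b (i2 (wi q)) (i1 (wj q))) (b (i2 (wj q₀)))) (i1 (wi q₀))
        = b.repr (ro b (i2 (wj q)) (i1 (wi q)) (b (i2 (wj q₀)))) (i1 (wi q₀))
          + b.repr (ro b (i2 (wi q)) (i1 (wj q)) (b (i2 (wj q₀)))) (i1 (wi q₀)) := by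
      rw [LinearMap.add_apply, map_add]; rfl
    rw [hsplit, ro_coord, ro_coord]
    have hz2 : ¬((i2 (wj q₀) : Fin (2*m+1)) = i2 (wi q)
        ∧ (i1 (wj q) : Fin (2*m+1)) = i1 (wi q₀)) := by
      rintro ⟨u1, u2⟩
      have w1 := congrArg Fin.val (i2_eq_i2.mp u1)
      have w2 := congrArg Fin.val (i1_eq_i1.mp u2)
      have l1 := wi_le_wj q
      have l2 := wi_le_wj q₀
      have d1 : (wi q).val = q.2.val := rfl
      have d2 : (wj q).val = q.1.val := rfl
      exact hd (by omega)
    have second : (if (i2 (wj q₀) : Fin (2*m+1)) = i2 (wi q) then (1:F) else 0)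
        * (if (i1 (wj q) : Fin (2*m+1)) = i1 (wi q₀) then (1:F) else 0) = 0 := by
      by_cases e1 : (i2 (wj q₀) : Fin (2*m+1)) = i2 (wi q)
      · rw [if_neg (fun e2 => hz2 ⟨e1, e2⟩)]; ring
      · rw [if_neg e1]; ring
    rw [second, add_zero, key]

lemma R_coord (q q₀ : TW m) :
    b.repr (psiR b q (b (i1 (wj q₀)))) (i2 (wi q₀)) = if q = q₀ then 1 else 0 := by
  have key : (if (i1 (wj q₀) : Fin (2*m+1)) = i1 (wj q) then (1:F) else 0)
      * (if (i2 (wi q) : Fin (2*m+1)) = i2 (wi q₀) then (1:F) else 0)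
      = if q = q₀ then 1 else 0 := by
    by_cases hq : q = q₀
    · subst hq; rw [if_pos rfl, if_pos rfl, if_pos rfl]; ring
    · have hne : ¬((i1 (wj q₀) : Fin (2*m+1)) = i1 (wj q)
          ∧ (i2 (wi q) : Fin (2*m+1)) = i2 (wi q₀)) := by
        rintro ⟨u1, u2⟩
        exact hq (TW_eq (congrArg Fin.val (i2_eq_i2.mp u2))
          (congrArg Fin.val (i1_eq_i1.mp u1)).symm)
      rw [if_neg hq]
      by_cases e1 : (i1 (wj q₀) : Fin (2*m+1)) = i1 (wj q)
      · rw [if_neg (fun e2 => hne ⟨e1, e2⟩)]; ring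
      · rw [if_neg e1]; ring
  by_cases hd : q.2.val = q.1.val
  · rw [psiR, if_pos hd, ro_coord, key]
  · rw [psiR, if_neg hd]
    have hsplit : b.repr ((ro b (i1 (wj q)) (i2 (wi q))
        + ro b (i1 (wi q)) (i2 (wj q))) (b (i1 (wj q₀)))) (i2 (wi q₀))
        = b.repr (ro b (i1 (wj q)) (i2 (wi q)) (b (i1 (wj q₀)))) (i2 (wi q₀))
          + b.repr (ro b (i1 (wi q)) (i2 (wj q)) (b (i1 (wj q₀)))) (i2 (wi q₀)) := by
      rw [LinearMap.add_apply, map_add]; rfl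
    rw [hsplit, ro_coord, ro_coord]
    have hz2 : ¬((i1 (wj q₀) : Fin (2*m+1)) = i1 (wi q)
        ∧ (i2 (wj q) : Fin (2*m+1)) = i2 (wi q₀)) := by
      rintro ⟨u1, u2⟩
      have w1 := congrArg Fin.val (i1_eq_i1.mp u1)
      have w2 := congrArg Fin.val (i2_eq_i2.mp u2)
      have l1 := wi_le_wj q
      have l2 := wi_le_wj q₀
      have d1 : (wi q).val = q.2.val := rfl
      have d2 : (wj q).val = q.1.val := rfl
      exact hd (by omega)
    have second : (if (i1 (wj q₀) : Fin (2*m+1)) = i1 (wi q) then (1:F) else 0)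
        * (if (i2 (wj q) : Fin (2*m+1)) = i2 (wi q₀) then (1:F) else 0) = 0 := by
      by_cases e1 : (i1 (wj q₀) : Fin (2*m+1)) = i1 (wi q)
      · rw [if_neg (fun e2 => hz2 ⟨e1, e2⟩)]; ring
      · rw [if_neg e1]; ring
    rw [second, add_zero, key]

end HeisProof

namespace HeisProof
variable {F : Type*} [Field F] {m : ℕ}
variable {L : Type*} [LieRing L] [LieAlgebra F L]
variable (b : Module.Basis (Fin (2*m+1)) F L)

lemma last_ne_i1 (a : Fin m) : Fin.last (2*m) ≠ (i1 a : Fin (2*m+1)) :=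
  fun h => i1_ne_last a h.symm
lemma last_ne_i2 (a : Fin m) : Fin.last (2*m) ≠ (i2 a : Fin (2*m+1)) :=
  fun h => i2_ne_last a h.symm
lemma last_ne_vE (k : Fin (2*m)) : Fin.last (2*m) ≠ vE k :=
  fun h => vE_ne_last k h.symm
lemma vE_ne_i1' (k : Fin (2*m)) (a : Fin m) (h : (k:ℕ) ≥ m) : vE k ≠ (i1 a : Fin (2*m+1)) := by
  have := a.is_lt
  simp [vE, i1, Fin.ext_iff]; omega

lemma psiP_coord (i j : Fin m) (c r : Fin (2*m+1)) :
    b.repr (psiP b i j (b c)) r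
      = (if c = i1 j then (1:F) else 0) * (if (i1 i : Fin (2*m+1)) = r then 1 else 0)
        - (if c = i2 i then (1:F) else 0) * (if (i2 j : Fin (2*m+1)) = r then 1 else 0) := by
  have hsplit : b.repr (psiP b i j (b c)) r
      = b.repr (ro b (i1 j) (i1 i) (b c)) r - b.repr (ro b (i2 i) (i2 j) (b c)) r := by
    rw [psiP, LinearMap.sub_apply, map_sub]; rfl
  rw [hsplit, ro_coord, ro_coord]

lemma psiQ_coord_gen (q : TW m) (c r : Fin (2*m+1)) :
    b.repr (psiQ b q (b c)) r
      = (if c = i2 (wj q) then (1:F) else 0) * (if (i1 (wi q) : Fin (2*m+1)) = r then 1 else 0)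
        + (if q.2.val = q.1.val then 0
            else (if c = i2 (wi q) then (1:F) else 0)
              * (if (i1 (wj q) : Fin (2*m+1)) = r then 1 else 0)) := by
  by_cases hd : q.2.val = q.1.val
  · rw [psiQ, if_pos hd, ro_coord, if_pos hd, add_zero]
  · rw [psiQ, if_neg hd, if_neg hd]
    have hsplit : b.repr ((ro b (i2 (wj q)) (i1 (wi q))
        + ro b (i2 (wi q)) (i1 (wj q))) (b c)) r
        = b.repr (ro b (i2 (wj q)) (i1 (wi q)) (b c)) r
          + b.repr (ro b (i2 (wi q)) (i1 (wj q)) (b c)) r := by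
      rw [LinearMap.add_apply, map_add]; rfl
    rw [hsplit, ro_coord, ro_coord]

lemma psiR_coord_gen (q : TW m) (c r : Fin (2*m+1)) :
    b.repr (psiR b q (b c)) r
      = (if c = i1 (wj q) then (1:F) else 0) * (if (i2 (wi q) : Fin (2*m+1)) = r then 1 else 0)
        + (if q.2.val = q.1.val then 0
            else (if c = i1 (wi q) then (1:F) else 0)
              * (if (i2 (wj q) : Fin (2*m+1)) = r then 1 else 0)) := by
  by_cases hd : q.2.val = q.1.val
  · rw [psiR, if_pos hd, ro_coord, if_pos hd, add_zero]
  · rw [psiR, if_neg hd, if_neg hd]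
    have hsplit : b.repr ((ro b (i1 (wj q)) (i2 (wi q))
        + ro b (i1 (wi q)) (i2 (wj q))) (b c)) r
        = b.repr (ro b (i1 (wj q)) (i2 (wi q)) (b c)) r
          + b.repr (ro b (i1 (wi q)) (i2 (wj q)) (b c)) r := by
      rw [LinearMap.add_apply, map_add]; rfl
    rw [hsplit, ro_coord, ro_coord]

lemma psiT_coord (c r : Fin (2*m+1)) :
    b.repr (psiT b (b c)) r
      = (∑ i : Fin m, (if c = i1 i then (1:F) else 0)
          * (if (i1 i : Fin (2*m+1)) = r then 1 else 0))
        + (if c = Fin.last (2*m) then (1:F) else 0)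
          * (if (Fin.last (2*m) : Fin (2*m+1)) = r then 1 else 0) := by
  have hsplit : b.repr (psiT b (b c)) r
      = (∑ i : Fin m, b.repr (ro b (i1 i) (i1 i) (b c)) r)
        + b.repr (ro b (Fin.last (2*m)) (Fin.last (2*m)) (b c)) r := by
    rw [psiT, LinearMap.add_apply, LinearMap.sum_apply, map_add, map_sum]
    simp [Finset.sum_apply']
  rw [hsplit, ro_coord]
  congr 1
  exact Finset.sum_congr rfl fun i _ => ro_coord b _ _ _ _

lemma psiB_coord (k : Fin (2*m)) (c r : Fin (2*m+1)) :
    b.repr (psiB b k (b c)) r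
      = (if c = vE k then (1:F) else 0)
        * (if (Fin.last (2*m) : Fin (2*m+1)) = r then 1 else 0) := by
  rw [psiB, ro_coord]

/-- the parameter space for derivations -/
noncomputable def Theta :
    (((Fin m × Fin m) → F) × ((TW m → F) × ((TW m → F) × (F × (Fin (2*m) → F)))))
      →ₗ[F] (L →ₗ[F] L) :=
  LinearMap.coprod
    (Fintype.linearCombination F (fun p : Fin m × Fin m => psiP b p.1 p.2))
    (LinearMap.coprod (Fintype.linearCombination F (psiQ b))
      (LinearMap.coprod (Fintype.linearCombination F (psiR b))
        (LinearMap.coprod (LinearMap.toSpanSingleton F _ (psiT b))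
          (Fintype.linearCombination F (psiB b)))))

lemma Theta_apply (P : (Fin m × Fin m) → F) (Q : TW m → F) (R : TW m → F)
    (t : F) (β : Fin (2*m) → F) :
    Theta b (P, Q, R, t, β)
      = (∑ p : Fin m × Fin m, P p • psiP b p.1 p.2)
        + ((∑ q, Q q • psiQ b q)
          + ((∑ q, R q • psiR b q) + (t • psiT b + ∑ k, β k • psiB b k))) := by
  simp [Theta, Fintype.linearCombination_apply, LinearMap.toSpanSingleton_apply]

lemma Theta_ker
    (hb : ∀ i j : Fin (2*m+1), ⁅b i, b j⁆ =
      if (j : ℕ) = (i : ℕ) + m ∧ (i : ℕ) < m then b (Fin.last (2*m))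
      else if (i : ℕ) = (j : ℕ) + m ∧ (j : ℕ) < m then - b (Fin.last (2*m))
      else 0)
    (κ : ((Fin m × Fin m) → F) × ((TW m → F) × ((TW m → F) × (F × (Fin (2*m) → F))))) :
    Dmap (Theta b κ) = 0 := by
  obtain ⟨P, Q, R, t, β⟩ := κ
  rw [Theta_apply]
  simp only [map_add, map_sum, map_smul, psiP_zero b hb, psiQ_zero b hb,
    psiR_zero b hb, psiT_zero b hb, psiB_zero b hb, smul_zero,
    Finset.sum_const_zero, add_zero]

lemma Theta_coord (P : (Fin m × Fin m) → F) (Q : TW m → F) (R : TW m → F)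
    (t : F) (β : Fin (2*m) → F) (c r : Fin (2*m+1)) :
    b.repr ((Theta b (P, Q, R, t, β)) (b c)) r
      = (∑ p : Fin m × Fin m, P p * b.repr (psiP b p.1 p.2 (b c)) r)
        + ((∑ q, Q q * b.repr (psiQ b q (b c)) r)
          + ((∑ q, R q * b.repr (psiR b q (b c)) r)
            + (t * b.repr (psiT b (b c)) r
              + ∑ k, β k * b.repr (psiB b k (b c)) r))) := by
  rw [Theta_apply]
  simp only [LinearMap.add_apply, LinearMap.sum_apply, LinearMap.smul_apply,
    map_add, map_sum, map_smul, Finsupp.add_apply, Finsupp.smul_apply,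
    Finset.sum_apply', smul_eq_mul]

end HeisProof

namespace HeisProof
variable {F : Type*} [Field F] {m : ℕ}
variable {L : Type*} [LieRing L] [LieAlgebra F L]
variable (b : Module.Basis (Fin (2*m+1)) F L)

lemma Theta_inj
    (κ : ((Fin m × Fin m) → F) × ((TW m → F) × ((TW m → F) × (F × (Fin (2*m) → F)))))
    (h : Theta b κ = 0) : κ = 0 := by
  obtain ⟨P, Q, R, t, β⟩ := κ
  have coord0 : ∀ c r : Fin (2*m+1),
      b.repr ((Theta b (P, Q, R, t, β)) (b c)) r = 0 := by
    intro c r; rw [h]; simp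
  -- extract t
  have ht : t = 0 := by
    have h1 := coord0 (Fin.last (2*m)) (Fin.last (2*m))
    rw [Theta_coord] at h1
    have hS1 : (∑ p : Fin m × Fin m,
        P p * b.repr (psiP b p.1 p.2 (b (Fin.last (2*m)))) (Fin.last (2*m))) = 0 := by
      apply Finset.sum_eq_zero; intro p _
      rw [psiP_coord, if_neg (last_ne_i1 p.2), if_neg (last_ne_i2 p.1)]; ring
    have hS2 : (∑ q, Q q * b.repr (psiQ b q (b (Fin.last (2*m)))) (Fin.last (2*m))) = 0 := by
      apply Finset.sum_eq_zero; intro q _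
      rw [psiQ_coord_gen, if_neg (last_ne_i2 (wj q)), if_neg (last_ne_i2 (wi q))]
      split_ifs <;> ring
    have hS3 : (∑ q, R q * b.repr (psiR b q (b (Fin.last (2*m)))) (Fin.last (2*m))) = 0 := by
      apply Finset.sum_eq_zero; intro q _
      rw [psiR_coord_gen, if_neg (last_ne_i1 (wj q)), if_neg (last_ne_i1 (wi q))]
      split_ifs <;> ring
    have hS4 : b.repr (psiT b (b (Fin.last (2*m)))) (Fin.last (2*m)) = 1 := by
      rw [psiT_coord, if_pos rfl]
      rw [Finset.sum_eq_zero (fun i _ => by rw [if_neg (last_ne_i1 i)]; ring)]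
      ring
    have hS5 : (∑ k, β k * b.repr (psiB b k (b (Fin.last (2*m)))) (Fin.last (2*m))) = 0 := by
      apply Finset.sum_eq_zero; intro k _
      rw [psiB_coord, if_neg (last_ne_vE k)]; ring
    rw [hS1, hS2, hS3, hS4, hS5] at h1
    simpa using h1
  -- extract β
  have hβ : β = 0 := by
    funext k₀
    have h1 := coord0 (vE k₀) (Fin.last (2*m))
    rw [Theta_coord] at h1
    have hS1 : (∑ p : Fin m × Fin m,
        P p * b.repr (psiP b p.1 p.2 (b (vE k₀))) (Fin.last (2*m))) = 0 := by
      apply Finset.sum_eq_zero; intro p _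
      rw [psiP_coord, if_neg (i1_ne_last p.1), if_neg (i2_ne_last p.2)]; ring
    have hS2 : (∑ q, Q q * b.repr (psiQ b q (b (vE k₀))) (Fin.last (2*m))) = 0 := by
      apply Finset.sum_eq_zero; intro q _
      rw [psiQ_coord_gen, if_neg (i1_ne_last (wi q)), if_neg (i1_ne_last (wj q))]
      split_ifs <;> ring
    have hS3 : (∑ q, R q * b.repr (psiR b q (b (vE k₀))) (Fin.last (2*m))) = 0 := by
      apply Finset.sum_eq_zero; intro q _
      rw [psiR_coord_gen, if_neg (i2_ne_last (wi q)), if_neg (i2_ne_last (wj q))]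
      split_ifs <;> ring
    have hS4 : b.repr (psiT b (b (vE k₀))) (Fin.last (2*m)) = 0 := by
      rw [psiT_coord, if_neg (vE_ne_last k₀)]
      rw [Finset.sum_eq_zero (fun i _ => by rw [if_neg (i1_ne_last i)]; ring)]
      ring
    have hS5 : (∑ k, β k * b.repr (psiB b k (b (vE k₀))) (Fin.last (2*m))) = β k₀ := by
      rw [Finset.sum_eq_single k₀]
      · rw [psiB_coord, if_pos rfl, if_pos rfl]; ring
      · intro k _ hk
        rw [psiB_coord, if_neg (fun hh => hk (vE_inj hh).symm)]; ring
      · simp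
    rw [hS1, hS2, hS3, hS4, hS5, ht] at h1
    simpa using h1
  -- extract P
  have hP : P = 0 := by
    funext p₀
    obtain ⟨i₀, j₀⟩ := p₀
    have h1 := coord0 (i1 j₀) (i1 i₀)
    rw [Theta_coord] at h1
    have hS1 : (∑ p : Fin m × Fin m,
        P p * b.repr (psiP b p.1 p.2 (b (i1 j₀))) (i1 i₀)) = P (i₀, j₀) := by
      rw [Finset.sum_eq_single (i₀, j₀)]
      · rw [psiP_coord, if_pos rfl, if_pos rfl, if_neg (i1_ne_i2 j₀ i₀)]; ring
      · intro p _ hp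
        rw [psiP_coord, if_neg (i1_ne_i2 j₀ p.1)]
        have hA : ¬(((i1 j₀ : Fin (2*m+1)) = i1 p.2)
            ∧ ((i1 p.1 : Fin (2*m+1)) = i1 i₀)) := by
          rintro ⟨u1, u2⟩
          exact hp (Prod.ext (i1_eq_i1.mp u2) (i1_eq_i1.mp u1).symm)
        by_cases e1 : (i1 j₀ : Fin (2*m+1)) = i1 p.2
        · rw [if_neg (fun e2 => hA ⟨e1, e2⟩)]; ring
        · rw [if_neg e1]; ring
      · simp
    have hS2 : (∑ q, Q q * b.repr (psiQ b q (b (i1 j₀))) (i1 i₀)) = 0 := by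
      apply Finset.sum_eq_zero; intro q _
      rw [psiQ_coord_gen, if_neg (i1_ne_i2 j₀ (wj q)), if_neg (i1_ne_i2 j₀ (wi q))]
      split_ifs <;> ring
    have hS3 : (∑ q, R q * b.repr (psiR b q (b (i1 j₀))) (i1 i₀)) = 0 := by
      apply Finset.sum_eq_zero; intro q _
      rw [psiR_coord_gen, if_neg (i2_ne_i1 (wi q) i₀), if_neg (i2_ne_i1 (wj q) i₀)]
      split_ifs <;> ring
    have hS5 : (∑ k, β k * b.repr (psiB b k (b (i1 j₀))) (i1 i₀)) = 0 := by
      apply Finset.sum_eq_zero; intro k _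
      rw [psiB_coord, if_neg (last_ne_i1 i₀)]; ring
    rw [hS1, hS2, hS3, hS5, ht] at h1
    simpa using h1
  -- extract Q
  have hQ : Q = 0 := by
    funext q₀
    have h1 := coord0 (i2 (wj q₀)) (i1 (wi q₀))
    rw [Theta_coord] at h1
    have hS1 : (∑ p : Fin m × Fin m,
        P p * b.repr (psiP b p.1 p.2 (b (i2 (wj q₀)))) (i1 (wi q₀))) = 0 := by
      apply Finset.sum_eq_zero; intro p _
      rw [psiP_coord, if_neg (i2_ne_i1 (wj q₀) p.2), if_neg (i2_ne_i1 p.2 (wi q₀))]; ring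
    have hS2 : (∑ q, Q q * b.repr (psiQ b q (b (i2 (wj q₀)))) (i1 (wi q₀))) = Q q₀ := by
      rw [Finset.sum_congr rfl (fun q _ => by rw [Q_coord b q q₀])]
      rw [Finset.sum_eq_single q₀]
      · rw [if_pos rfl]; ring
      · intro q _ hq; rw [if_neg hq]; ring
      · simp
    have hS3 : (∑ q, R q * b.repr (psiR b q (b (i2 (wj q₀)))) (i1 (wi q₀))) = 0 := by
      apply Finset.sum_eq_zero; intro q _
      rw [psiR_coord_gen, if_neg (i2_ne_i1 (wj q₀) (wj q)), if_neg (i2_ne_i1 (wj q₀) (wi q))]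
      split_ifs <;> ring
    have hS4 : b.repr (psiT b (b (i2 (wj q₀)))) (i1 (wi q₀)) = 0 := by
      rw [psiT_coord, if_neg (i2_ne_last (wj q₀))]
      rw [Finset.sum_eq_zero (fun i _ => by rw [if_neg (i2_ne_i1 (wj q₀) i)]; ring)]
      ring
    have hS5 : (∑ k, β k * b.repr (psiB b k (b (i2 (wj q₀)))) (i1 (wi q₀))) = 0 := by
      apply Finset.sum_eq_zero; intro k _
      rw [psiB_coord, if_neg (last_ne_i1 (wi q₀))]; ring
    rw [hS1, hS2, hS3, hS4, hS5] at h1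
    simpa using h1
  -- extract R
  have hR : R = 0 := by
    funext q₀
    have h1 := coord0 (i1 (wj q₀)) (i2 (wi q₀))
    rw [Theta_coord] at h1
    have hS1 : (∑ p : Fin m × Fin m,
        P p * b.repr (psiP b p.1 p.2 (b (i1 (wj q₀)))) (i2 (wi q₀))) = 0 := by
      apply Finset.sum_eq_zero; intro p _
      rw [psiP_coord, if_neg (i1_ne_i2 p.1 (wi q₀)), if_neg (i1_ne_i2 (wj q₀) p.1)]; ring
    have hS2 : (∑ q, Q q * b.repr (psiQ b q (b (i1 (wj q₀)))) (i2 (wi q₀))) = 0 := by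
      apply Finset.sum_eq_zero; intro q _
      rw [psiQ_coord_gen, if_neg (i1_ne_i2 (wj q₀) (wj q)), if_neg (i1_ne_i2 (wj q₀) (wi q))]
      split_ifs <;> ring
    have hS3 : (∑ q, R q * b.repr (psiR b q (b (i1 (wj q₀)))) (i2 (wi q₀))) = R q₀ := by
      rw [Finset.sum_congr rfl (fun q _ => by rw [R_coord b q q₀])]
      rw [Finset.sum_eq_single q₀]
      · rw [if_pos rfl]; ring
      · intro q _ hq; rw [if_neg hq]; ring
      · simp
    have hS4 : b.repr (psiT b (b (i1 (wj q₀)))) (i2 (wi q₀)) = 0 := by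
      rw [psiT_coord, if_neg (i1_ne_last (wj q₀))]
      rw [Finset.sum_eq_zero (fun i _ => by rw [if_neg (i1_ne_i2 i (wi q₀))]; ring)]
      ring
    have hS5 : (∑ k, β k * b.repr (psiB b k (b (i1 (wj q₀)))) (i2 (wi q₀))) = 0 := by
      apply Finset.sum_eq_zero; intro k _
      rw [psiB_coord, if_neg (last_ne_i2 (wi q₀))]; ring
    rw [hS1, hS2, hS3, hS4, hS5] at h1
    simpa using h1
  rw [hP, hQ, hR, ht, hβ]
  rfl

end HeisProof

namespace HeisProof

lemma card_TS (n : ℕ) : 2 * Fintype.card (TS n) = n * (n - 1) := by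
  rw [Fintype.card_sigma]
  simp only [Fintype.card_fin]
  rw [Fin.sum_univ_eq_sum_range (fun i => i) n, mul_comm]
  exact Finset.sum_range_id_mul_two n

lemma card_TW (n : ℕ) : 2 * Fintype.card (TW n) = n * (n + 1) := by
  rw [Fintype.card_sigma]
  simp only [Fintype.card_fin]
  rw [Finset.sum_add_distrib, Fin.sum_univ_eq_sum_range (fun i => i) n]
  simp only [Finset.sum_const, Finset.card_univ, Fintype.card_fin, smul_eq_mul, mul_one]
  have h := Finset.sum_range_id_mul_two n
  have h2 : n * (n + 1) = n * (n - 1) + 2 * n := by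
    cases n with
    | zero => rfl
    | succ k =>
        show (k+1) * (k+2) = (k+1) * k + 2 * (k+1)
        ring
  omega

end HeisProof

open HeisProof in
/-- For every integer `m ≥ 1` and every field `F`, the space of
2-coboundaries of the Heisenberg Lie algebra `h_m` with adjoint coefficients, i.e. the
image of the map `ψ ↦ d¹ψ` (where `d¹ψ(x,y) = ⁅x,ψ y⁆ − ⁅y,ψ x⁆ − ψ⁅x,y⁆`) from linear
maps `h_m → h_m` to alternating bilinear maps, has dimension `2m² + m` over `F`. -/
theorem heisenberg_two_coboundaries_dim
    (F : Type*) [Field F] (m : ℕ) (hm : 1 ≤ m)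
    (L : Type*) [LieRing L] [LieAlgebra F L]
    (b : Module.Basis (Fin (2*m+1)) F L)
    (hb : ∀ i j : Fin (2*m+1), ⁅b i, b j⁆ =
      if (j : ℕ) = (i : ℕ) + m ∧ (i : ℕ) < m then b (Fin.last (2*m))
      else if (i : ℕ) = (j : ℕ) + m ∧ (j : ℕ) < m then - b (Fin.last (2*m))
      else 0)
    (B : Submodule F (L → L → L))
    (hB : ∀ φ : L → L → L, φ ∈ B ↔
      ∃ ψ : L →ₗ[F] L, ∀ x y : L, φ x y = ⁅x, ψ y⁆ - ⁅y, ψ x⁆ - ψ ⁅x, y⁆) :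
    Module.finrank F ↥B = 2*m^2 + m := by
  haveI : Module.Finite F L := Module.Finite.of_basis b
  haveI : Module.Free F L := Module.Free.of_basis b
  have hBe : B = LinearMap.range (Dmap (F := F) (L := L)) := B_eq_range B hB
  -- rank nullity
  have hrn : Module.finrank F ↥(LinearMap.range (Dmap (F := F) (L := L)))
      + Module.finrank F ↥(LinearMap.ker (Dmap (F := F) (L := L)))
      = Module.finrank F (L →ₗ[F] L) :=
    LinearMap.finrank_range_add_finrank_ker _
  have hdim : Module.finrank F (L →ₗ[F] L) = (2*m+1) * (2*m+1) := by
    rw [Module.finrank_linearMap, Module.finrank_eq_card_basis b, Fintype.card_fin]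
  -- lower bound
  have hinj : Function.Injective ⇑(Dmap.comp (PsiW b)) := by
    rw [← LinearMap.ker_eq_bot, LinearMap.ker_eq_bot']
    rintro ⟨A, v⟩ hw
    have hz := PhiW_ker b hb A v (by simpa [LinearMap.comp_apply] using hw)
    exact Prod.ext hz.1 hz.2
  haveI : FiniteDimensional F ↥(LinearMap.range (Dmap (F := F) (L := L))) :=
    LinearMap.finiteDimensional_range _
  have hle : LinearMap.range (Dmap.comp (PsiW b))
      ≤ LinearMap.range (Dmap (F := F) (L := L)) :=
    LinearMap.range_comp_le_range _ _
  have lower : Module.finrank F ((TS (2*m) → F) × (Fin (2*m) → F))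
      ≤ Module.finrank F ↥(LinearMap.range (Dmap (F := F) (L := L))) := by
    rw [← LinearMap.finrank_range_of_inj hinj]
    exact LinearMap.finrank_le_finrank_of_injective (Submodule.inclusion_injective hle)
  -- upper bound
  have hmem : ∀ κ, Theta b κ ∈ LinearMap.ker (Dmap (F := F) (L := L)) :=
    fun κ => LinearMap.mem_ker.mpr (Theta_ker b hb κ)
  have hinj2 : Function.Injective
      ⇑((Theta b).codRestrict (LinearMap.ker (Dmap (F := F) (L := L))) hmem) := by
    rw [← LinearMap.ker_eq_bot, LinearMap.ker_eq_bot']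
    intro κ hκ
    apply Theta_inj b κ
    have := congrArg Subtype.val hκ
    simpa using this
  have upper : Module.finrank F
      (((Fin m × Fin m) → F) × ((TW m → F) × ((TW m → F) × (F × (Fin (2*m) → F)))))
      ≤ Module.finrank F ↥(LinearMap.ker (Dmap (F := F) (L := L))) :=
    LinearMap.finrank_le_finrank_of_injective hinj2
  -- compute parameter space dimensions
  have finW : Module.finrank F ((TS (2*m) → F) × (Fin (2*m) → F))
      = Fintype.card (TS (2*m)) + 2*m := by
    rw [Module.finrank_prod, Module.finrank_pi, Module.finrank_pi, Fintype.card_fin]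
  have finK : Module.finrank F
      (((Fin m × Fin m) → F) × ((TW m → F) × ((TW m → F) × (F × (Fin (2*m) → F)))))
      = m*m + (Fintype.card (TW m) + (Fintype.card (TW m) + (1 + 2*m))) := by
    simp [Module.finrank_prod, Module.finrank_pi, Module.finrank_self,
      Fintype.card_prod, Fintype.card_fin]
  -- arithmetic
  obtain ⟨u, rfl⟩ : ∃ u, m = u + 1 := ⟨m - 1, by omega⟩
  have hS := card_TS (2*(u+1))
  have hS' := card_TW (u+1)
  rw [hBe]
  rw [finW] at lower
  rw [finK] at upper
  rw [hdim] at hrn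
  set S := Fintype.card (TS (2*(u+1))) with hSdef
  set S' := Fintype.card (TW (u+1)) with hS'def
  set r := Module.finrank F ↥(LinearMap.range (Dmap (F := F) (L := L))) with hr
  set kk := Module.finrank F ↥(LinearMap.ker (Dmap (F := F) (L := L))) with hk
  have e1 : 2 * S = 4*(u*u) + 6*u + 2 := by
    rw [hS]
    have : 2*(u+1) - 1 = 2*u + 1 := by omega
    rw [this]
    ring
  have e2 : 2 * S' = (u*u) + 3*u + 2 := by
    rw [hS']
    ring
  have e3 : (2*(u+1)+1) * (2*(u+1)+1) = 4*(u*u) + 12*u + 9 := by ring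
  have e4 : (u+1)*(u+1) = u*u + 2*u + 1 := by ring
  have e5 : 2*(u+1)^2 + (u+1) = 2*(u*u) + 5*u + 3 := by ring
  rw [e3] at hrn
  rw [e5]
  omega
end

section
/- For m = 1 and every field F, the space of 2-cocycles of the Heisenberg Lie algebra h_1 with adjoint coefficients has dimension 8 over F. -/
section HeisenbergAux
variable {F L : Type*} [Field F] [LieRing L] [LieAlgebra F L]

private lemma heisAuxZeroLeft {φ : L → L → L}
    (h1 : ∀ (a : F) (x x' y : L), φ (a • x + x') y = a • φ x y + φ x' y) (y : L) :
    φ 0 y = 0 := by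
  have h := h1 1 0 0 y
  simp only [one_smul, add_zero, smul_zero, zero_add] at h
  exact (right_eq_add.mp h)

private lemma heisAuxSmulLeft {φ : L → L → L}
    (h1 : ∀ (a : F) (x x' y : L), φ (a • x + x') y = a • φ x y + φ x' y)
    (a : F) (x y : L) : φ (a • x) y = a • φ x y := by
  have h := h1 a x 0 y
  rwa [add_zero, heisAuxZeroLeft h1, add_zero] at h

private lemma heisAuxAddLeft {φ : L → L → L}
    (h1 : ∀ (a : F) (x x' y : L), φ (a • x + x') y = a • φ x y + φ x' y)
    (x x' y : L) : φ (x + x') y = φ x y + φ x' y := by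
  have h := h1 1 x x' y
  rwa [one_smul, one_smul] at h

private lemma heisAuxZeroRight {φ : L → L → L}
    (h2 : ∀ (a : F) (x y y' : L), φ x (a • y + y') = a • φ x y + φ x y') (x : L) :
    φ x 0 = 0 := by
  have h := h2 1 x 0 0
  simp only [one_smul, add_zero, smul_zero, zero_add] at h
  exact (right_eq_add.mp h)

private lemma heisAuxSmulRight {φ : L → L → L}
    (h2 : ∀ (a : F) (x y y' : L), φ x (a • y + y') = a • φ x y + φ x y')
    (a : F) (x y : L) : φ x (a • y) = a • φ x y := by
  have h := h2 a x y 0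
  rwa [add_zero, heisAuxZeroRight h2, add_zero] at h

private lemma heisAuxAddRight {φ : L → L → L}
    (h2 : ∀ (a : F) (x y y' : L), φ x (a • y + y') = a • φ x y + φ x y')
    (x y y' : L) : φ x (y + y') = φ x y + φ x y' := by
  have h := h2 1 x y y'
  rwa [one_smul, one_smul] at h

private lemma heisAuxSwap {φ : L → L → L}
    (h1 : ∀ (a : F) (x x' y : L), φ (a • x + x') y = a • φ x y + φ x' y)
    (h2 : ∀ (a : F) (x y y' : L), φ x (a • y + y') = a • φ x y + φ x y')
    (h3 : ∀ x : L, φ x x = 0) (x y : L) : φ y x = - φ x y := by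
  have h := h3 (x + y)
  rw [heisAuxAddLeft h1, heisAuxAddRight h2, heisAuxAddRight h2, h3, h3, zero_add,
    add_zero] at h
  rw [eq_neg_iff_add_eq_zero, add_comm]
  exact h

end HeisenbergAux

/-- For `m = 1` and every field `F`, the space of 2-cocycles
of the Heisenberg Lie algebra `h_m` with adjoint coefficients (alternating bilinear maps
`φ : h_m × h_m → h_m` with
`⁅x,φ(y,z)⁆ − ⁅y,φ(x,z)⁆ + ⁅z,φ(x,y)⁆ − φ(⁅x,y⁆,z) + φ(⁅x,z⁆,y) − φ(⁅y,z⁆,x) = 0`)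
has dimension `8` over `F`. -/
theorem heisenberg_two_cocycles_dim_m_eq_one
    (F : Type*) [Field F] (m : ℕ) (hm : m = 1)
    (L : Type*) [LieRing L] [LieAlgebra F L]
    (b : Module.Basis (Fin (2*m+1)) F L)
    (hb : ∀ i j : Fin (2*m+1), ⁅b i, b j⁆ =
      if (j : ℕ) = (i : ℕ) + m ∧ (i : ℕ) < m then b (Fin.last (2*m))
      else if (i : ℕ) = (j : ℕ) + m ∧ (j : ℕ) < m then - b (Fin.last (2*m))
      else 0)
    (Z : Submodule F (L → L → L))
    (hZ : ∀ φ : L → L → L, φ ∈ Z ↔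
      (∀ (a : F) (x x' y : L), φ (a • x + x') y = a • φ x y + φ x' y) ∧
      (∀ (a : F) (x y y' : L), φ x (a • y + y') = a • φ x y + φ x y') ∧
      (∀ x : L, φ x x = 0) ∧
      (∀ x y z : L, ⁅x, φ y z⁆ - ⁅y, φ x z⁆ + ⁅z, φ x y⁆
        - φ ⁅x, y⁆ z + φ ⁅x, z⁆ y - φ ⁅y, z⁆ x = 0)) :
    Module.finrank F ↥Z = 8 := by
  subst hm
  let b' : Module.Basis (Fin 3) F L := b
  have h01 : ⁅b' 0, b' 1⁆ = b' 2 := by simpa using hb 0 1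
  have h10 : ⁅b' 1, b' 0⁆ = - b' 2 := by simpa using hb 1 0
  have h02 : ⁅b' 0, b' 2⁆ = 0 := by simpa using hb 0 2
  have h20 : ⁅b' 2, b' 0⁆ = 0 := by simpa using hb 2 0
  have h12 : ⁅b' 1, b' 2⁆ = 0 := by simpa using hb 1 2
  have h21 : ⁅b' 2, b' 1⁆ = 0 := by simpa using hb 2 1
  -- general bracket formula
  have lieF : ∀ x y : L,
      ⁅x, y⁆ = (b'.repr x 0 * b'.repr y 1 - b'.repr x 1 * b'.repr y 0) • b' 2 := by
    intro x y
    conv_lhs => rw [← b'.sum_repr x, ← b'.sum_repr y]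
    rw [Fin.sum_univ_three, Fin.sum_univ_three]
    simp only [add_lie, lie_add, smul_lie, lie_smul, h01, h10, h02, h20, h12, h21,
      lie_self, smul_zero, zero_add, add_zero, smul_neg]
    module
  -- representation of cocycles in terms of values on basis pairs
  have hrepr : ∀ φ : L → L → L, φ ∈ Z → ∀ x y : L,
      φ x y = (b'.repr x 0 * b'.repr y 1 - b'.repr x 1 * b'.repr y 0) • φ (b' 0) (b' 1)
        + (b'.repr x 0 * b'.repr y 2 - b'.repr x 2 * b'.repr y 0) • φ (b' 0) (b' 2)
        + (b'.repr x 1 * b'.repr y 2 - b'.repr x 2 * b'.repr y 1) • φ (b' 1) (b' 2) := by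
    intro φ hφ x y
    obtain ⟨hl1, hl2, hl3, _⟩ := (hZ φ).mp hφ
    conv_lhs => rw [← b'.sum_repr x, ← b'.sum_repr y]
    rw [Fin.sum_univ_three, Fin.sum_univ_three]
    simp only [heisAuxAddLeft hl1, heisAuxAddRight hl2, heisAuxSmulLeft hl1,
      heisAuxSmulRight hl2, hl3, heisAuxSwap hl1 hl2 hl3 (b' 0) (b' 1),
      heisAuxSwap hl1 hl2 hl3 (b' 0) (b' 2), heisAuxSwap hl1 hl2 hl3 (b' 1) (b' 2),
      smul_zero, zero_add, add_zero, smul_neg]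
    module
  -- constructed cocycles
  have hmem : ∀ u v w : L, b'.repr v 0 + b'.repr w 1 = 0 →
      (fun x y : L => (b'.repr x 0 * b'.repr y 1 - b'.repr x 1 * b'.repr y 0) • u
        + (b'.repr x 0 * b'.repr y 2 - b'.repr x 2 * b'.repr y 0) • v
        + (b'.repr x 1 * b'.repr y 2 - b'.repr x 2 * b'.repr y 1) • w) ∈ Z := by
    intro u v w hc
    have hw1 : b'.repr w 1 = - b'.repr v 0 := by linear_combination hc
    rw [hZ]
    refine ⟨?_, ?_, ?_, ?_⟩
    · intro a x x' y
      simp only [map_add, map_smul, Finsupp.add_apply, Finsupp.smul_apply, smul_eq_mul]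
      module
    · intro a x y y'
      simp only [map_add, map_smul, Finsupp.add_apply, Finsupp.smul_apply, smul_eq_mul]
      module
    · intro x
      module
    · intro x y z
      simp only [lieF, map_add, map_smul, Finsupp.add_apply, Finsupp.smul_apply, smul_eq_mul,
        Module.Basis.repr_self, Finsupp.single_apply, Fin.reduceEq, if_false, if_true, reduceIte, hw1]
      module
  -- the evaluation map
  let T : ↥Z →ₗ[F] L × L × L :=
    { toFun := fun φ => (φ.1 (b' 0) (b' 1), φ.1 (b' 0) (b' 2), φ.1 (b' 1) (b' 2))
      map_add' := fun _ _ => rfl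
      map_smul' := fun _ _ => rfl }
  -- the constraint map
  let S : (L × L × L) →ₗ[F] F :=
    { toFun := fun t => b'.repr t.2.1 0 + b'.repr t.2.2 1
      map_add' := by
        intro s t
        simp only [Prod.snd_add, Prod.fst_add, map_add, Finsupp.add_apply]
        ring
      map_smul' := by
        intro a t
        simp only [Prod.smul_snd, Prod.smul_fst, map_smul, Finsupp.smul_apply,
          smul_eq_mul, RingHom.id_apply]
        ring }
  have hTinj : Function.Injective T := by
    rw [← LinearMap.ker_eq_bot]
    rw [Submodule.eq_bot_iff]
    rintro ⟨φ, hφ⟩ hker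
    simp only [LinearMap.mem_ker, T, LinearMap.coe_mk, AddHom.coe_mk, Prod.mk_eq_zero] at hker
    obtain ⟨e1, e2, e3⟩ := hker
    apply Subtype.ext
    funext x y
    show φ x y = 0
    rw [hrepr φ hφ x y, e1, e2, e3]
    simp
  have hrange : LinearMap.range T = LinearMap.ker S := by
    apply le_antisymm
    · rintro t ⟨⟨φ, hφ⟩, rfl⟩
      obtain ⟨hl1, hl2, hl3, hl4⟩ := (hZ φ).mp hφ
      have hco := hl4 (b' 0) (b' 1) (b' 2)
      rw [h01, h02, h12, lieF (b' 0), lieF (b' 1), lieF (b' 2)] at hco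
      simp only [Module.Basis.repr_self, Finsupp.single_apply, Fin.reduceEq, if_false, if_true,
        reduceIte, hl3, heisAuxZeroLeft hl1, one_mul, zero_mul, mul_zero, sub_zero, zero_sub,
        neg_smul, zero_smul, sub_neg_eq_add, add_zero, sub_zero, neg_zero] at hco
      rw [LinearMap.mem_ker]
      simp only [T, S, LinearMap.coe_mk, AddHom.coe_mk]
      have hb2 : b' 2 ≠ 0 := b'.ne_zero 2
      have : (b'.repr (φ (b' 1) (b' 2)) 1 + b'.repr (φ (b' 0) (b' 2)) 0) • b' 2 = 0 := by
        rw [add_smul]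
        linear_combination (norm := module) hco
      rcases smul_eq_zero.mp this with h | h
      · linear_combination h
      · exact absurd h hb2
    · rintro ⟨u, v, w⟩ ht
      rw [LinearMap.mem_ker] at ht
      simp only [S, LinearMap.coe_mk, AddHom.coe_mk] at ht
      refine ⟨⟨_, hmem u v w ht⟩, ?_⟩
      simp only [T, LinearMap.coe_mk, AddHom.coe_mk]
      simp [Module.Basis.repr_self, Finsupp.single_apply]
  have : FiniteDimensional F L := Module.Finite.of_basis b'
  have hdimL : Module.finrank F L = 3 := by
    rw [Module.finrank_eq_card_basis b']
    simp
  have hSsurj : Function.Surjective S := by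
    intro a
    refine ⟨(0, a • b' 0, 0), ?_⟩
    simp [S, Module.Basis.repr_self]
  have hrk := LinearMap.finrank_range_add_finrank_ker S
  rw [LinearMap.range_eq_top.mpr hSsurj] at hrk
  have hdimP : Module.finrank F (L × L × L) = 9 := by
    simp [Module.finrank_prod, hdimL]
  rw [hdimP, finrank_top, Module.finrank_self] at hrk
  have : Module.finrank F ↥Z = Module.finrank F ↥(LinearMap.ker S) := by
    rw [← hrange]
    exact (LinearEquiv.ofInjective T hTinj).finrank_eq
  omega
end

section
/- Let F be an algebraically closed field of characteristic p > 2, let m ≥ 1, and let λ = (λ_1, …, λ_{2m+1}) ∈ F^{2m+1}. Then the set of maps { g ↦ ψ(g^{[p]}) : ψ a derivation of h_m } is exactly the F-linear span of the single map σ_λ defined by σ_λ(Σ_{i=1}^{2m+1} a_i e_i) = (Σ_{i=1}^{2m+1} λ_i a_i^p) e_{2m+1}. In particular this set is a subspace of dimension 1 if λ ≠ 0 and is {0} if λ = 0. -/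
/-- Let `F` be an algebraically closed field of characteristic `p > 2`,
let `m ≥ 1`, and let `λ ∈ F^{2m+1}`, with associated `[p]`-map
`g^{[p]} = (Σ_i a_i^p λ_i) e_{2m+1}` for `g = Σ_i a_i e_i`.  Then the set of maps
`{ g ↦ ψ(g^{[p]}) : ψ a derivation of h_m }` is exactly the `F`-linear span of the single
map `σ_λ` defined by `σ_λ(Σ_i a_i e_i) = (Σ_i λ_i a_i^p) e_{2m+1}`.  In particular this
set is a subspace of dimension `1` if `λ ≠ 0` and is `{0}` if `λ = 0`. -/
theorem heisenberg_ind1_image_p_gt_two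
    (F : Type*) [Field F] [IsAlgClosed F] (p : ℕ) [CharP F p] (hp : p.Prime) (hp2 : 2 < p)
    (m : ℕ) (hm : 1 ≤ m)
    (L : Type*) [LieRing L] [LieAlgebra F L]
    (b : Module.Basis (Fin (2*m+1)) F L)
    (hb : ∀ i j : Fin (2*m+1), ⁅b i, b j⁆ =
      if (j : ℕ) = (i : ℕ) + m ∧ (i : ℕ) < m then b (Fin.last (2*m))
      else if (i : ℕ) = (j : ℕ) + m ∧ (j : ℕ) < m then - b (Fin.last (2*m))
      else 0)
    (lam : Fin (2*m+1) → F)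
    (P : L → L)
    (hP : ∀ g : L, P g = (∑ i, (b.repr g i)^p * lam i) • b (Fin.last (2*m)))
    (sig : L → L)
    (hsig : ∀ g : L, sig g = (∑ i, lam i * (b.repr g i)^p) • b (Fin.last (2*m))) :
    {f : L → L | ∃ ψ : LieDerivation F L L, f = fun g => ψ (P g)} =
      ↑(Submodule.span F {sig}) ∧
    (lam ≠ 0 → Module.finrank F ↥(Submodule.span F {sig}) = 1) ∧
    (lam = 0 →
      {f : L → L | ∃ ψ : LieDerivation F L L, f = fun g => ψ (P g)} = {0}) := by
  set z : L := b (Fin.last (2*m)) with hz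
  have hspan : ∀ x : L, x ∈ Submodule.span F (Set.range b) := fun x => by
    rw [b.span_eq]; trivial
  -- every bracket lies in the span of z
  have hbz : ∀ i j : Fin (2*m+1), ⁅b i, b j⁆ ∈ Submodule.span F {z} := by
    intro i j
    rw [hb]
    split_ifs
    · exact Submodule.mem_span_singleton_self z
    · exact Submodule.neg_mem _ (Submodule.mem_span_singleton_self z)
    · exact Submodule.zero_mem _
  have hxz : ∀ x y : L, ⁅x, y⁆ ∈ Submodule.span F {z} := by
    have h1 : ∀ (j : Fin (2*m+1)) (x : L), ⁅x, b j⁆ ∈ Submodule.span F {z} := by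
      intro j x
      induction hspan x using Submodule.span_induction with
      | mem u hu => obtain ⟨i, rfl⟩ := hu; exact hbz i j
      | zero => simp
      | add u v _ _ hu hv => rw [add_lie]; exact Submodule.add_mem _ hu hv
      | smul a u _ hu => rw [smul_lie]; exact Submodule.smul_mem _ _ hu
    intro x y
    induction hspan y using Submodule.span_induction with
    | mem u hu => obtain ⟨j, rfl⟩ := hu; exact h1 j x
    | zero => simp
    | add u v _ _ hu hv => rw [lie_add]; exact Submodule.add_mem _ hu hv
    | smul a u _ hu => rw [lie_smul]; exact Submodule.smul_mem _ _ hu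
  -- the model derivation D
  set v : Fin (2*m+1) → L :=
    fun i => if (i : ℕ) < m then b i else if (i : ℕ) = 2*m then b i else 0 with hv
  set D : L →ₗ[F] L := b.constr F v with hD
  have hDb : ∀ i, D (b i) = v i := fun i => b.constr_basis F v i
  have hDz : D z = z := by
    rw [hz, hDb]
    simp only [hv, Fin.val_last]
    rw [if_neg (by omega)]
    simp
  have hbasis : ∀ i j, D ⁅b i, b j⁆ = ⁅D (b i), b j⁆ + ⁅b i, D (b j)⁆ := by
    intro i j
    by_cases h1 : (j : ℕ) = (i : ℕ) + m ∧ (i : ℕ) < m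
    · obtain ⟨hj, hi⟩ := h1
      have hbr : ⁅b i, b j⁆ = z := by rw [hb, if_pos ⟨hj, hi⟩]
      have hDi : D (b i) = b i := by rw [hDb]; simp only [hv]; rw [if_pos hi]
      have hDj : D (b j) = 0 := by
        rw [hDb]; simp only [hv]; rw [if_neg (by omega), if_neg (by omega)]
      rw [hbr, hDz, hDi, hDj, lie_zero, add_zero, hbr]
    · by_cases h2 : (i : ℕ) = (j : ℕ) + m ∧ (j : ℕ) < m
      · obtain ⟨hi, hj⟩ := h2
        have hbr : ⁅b i, b j⁆ = -z := by rw [hb, if_neg h1, if_pos ⟨hi, hj⟩]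
        have hDi : D (b i) = 0 := by
          rw [hDb]; simp only [hv]; rw [if_neg (by omega), if_neg (by omega)]
        have hDj : D (b j) = b j := by rw [hDb]; simp only [hv]; rw [if_pos hj]
        rw [hbr, map_neg, hDz, hDi, hDj, zero_lie, zero_add, hbr]
      · have hbr : ⁅b i, b j⁆ = 0 := by rw [hb, if_neg h1, if_neg h2]
        have hDi : D (b i) = b i ∨ D (b i) = 0 := by
          rw [hDb]; simp only [hv]; split_ifs <;> simp
        have hDj : D (b j) = b j ∨ D (b j) = 0 := by
          rw [hDb]; simp only [hv]; split_ifs <;> simp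
        rw [hbr, map_zero]
        rcases hDi with h | h <;> rcases hDj with h' | h' <;>
          rw [h, h'] <;> simp [hbr]
  have leib : ∀ x y : L, D ⁅x, y⁆ = ⁅D x, y⁆ + ⁅x, D y⁆ := by
    have h1 : ∀ (i : Fin (2*m+1)) (y : L),
        D ⁅b i, y⁆ = ⁅D (b i), y⁆ + ⁅b i, D y⁆ := by
      intro i y
      induction hspan y using Submodule.span_induction with
      | mem u hu => obtain ⟨j, rfl⟩ := hu; exact hbasis i j
      | zero => simp
      | add u w _ _ hu hw => simp only [lie_add, map_add, hu, hw]; abel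
      | smul a u _ hu => simp only [lie_smul, map_smul, hu, smul_add]
    intro x y
    induction hspan x using Submodule.span_induction with
    | mem u hu => obtain ⟨i, rfl⟩ := hu; exact h1 i y
    | zero => simp
    | add u w _ _ hu hw => simp only [add_lie, map_add, hu, hw]; abel
    | smul a u _ hu => simp only [smul_lie, map_smul, hu, smul_add]
  let Dder : LieDerivation F L L :=
    ⟨D, fun a c => by rw [leib a c, ← lie_skew (D a) c]; abel⟩
  have hDder : ∀ x : L, Dder x = D x := fun _ => rfl
  -- every derivation scales z
  have psiz : ∀ ψ : LieDerivation F L L, ∃ t : F, ψ z = t • z := by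
    intro ψ
    have hm0 : (0 : ℕ) < 2*m+1 := by omega
    have hmm : m < 2*m+1 := by omega
    have hzeq : z = ⁅b ⟨0, hm0⟩, b ⟨m, hmm⟩⁆ := by
      rw [hb, if_pos ⟨(zero_add m).symm, hm⟩]
    have he : ψ z = ⁅b ⟨0, hm0⟩, ψ (b ⟨m, hmm⟩)⁆ + ⁅ψ (b ⟨0, hm0⟩), b ⟨m, hmm⟩⁆ := by
      conv_lhs => rw [hzeq]
      rw [LieDerivation.apply_lie_eq_add]
    have hmem : ψ z ∈ Submodule.span F {z} := by
      rw [he]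
      exact Submodule.add_mem _ (hxz _ _) (hxz _ _)
    rw [Submodule.mem_span_singleton] at hmem
    obtain ⟨t, ht⟩ := hmem
    exact ⟨t, ht.symm⟩
  have hsum : ∀ g : L, (∑ i, lam i * (b.repr g i)^p) = ∑ i, (b.repr g i)^p * lam i :=
    fun g => Finset.sum_congr rfl fun i _ => mul_comm _ _
  have happ : ∀ (ψ : LieDerivation F L L) (t : F), ψ z = t • z →
      (fun g => ψ (P g)) = t • sig := by
    intro ψ t ht
    funext g
    rw [hP g, map_smul, ht, Pi.smul_apply, hsig g, hsum g]
    exact smul_comm _ _ _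
  have hset : {f : L → L | ∃ ψ : LieDerivation F L L, f = fun g => ψ (P g)} =
      ↑(Submodule.span F {sig}) := by
    ext f
    simp only [Set.mem_setOf_eq, SetLike.mem_coe, Submodule.mem_span_singleton]
    constructor
    · rintro ⟨ψ, rfl⟩
      obtain ⟨t, ht⟩ := psiz ψ
      exact ⟨t, (happ ψ t ht).symm⟩
    · rintro ⟨t, rfl⟩
      refine ⟨t • Dder, (happ (t • Dder) t ?_).symm⟩
      rw [LieDerivation.smul_apply, hDder, hDz]
  refine ⟨hset, ?_, ?_⟩
  · intro hl
    have hne : sig ≠ 0 := by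
      intro hs
      obtain ⟨i, hi⟩ := Function.ne_iff.mp hl
      have h1 : sig (b i) = lam i • z := by
        rw [hsig]
        congr 1
        rw [Finset.sum_eq_single i]
        · simp [Module.Basis.repr_self]
        · intro j _ hj
          simp [Module.Basis.repr_self, Finsupp.single_eq_of_ne (Ne.symm hj).symm,
            zero_pow hp.ne_zero, Finsupp.single_apply, hj.symm]
        · simp
      rw [hs] at h1
      exact smul_ne_zero hi (b.ne_zero _) h1.symm
    exact finrank_span_singleton hne
  · intro h0
    have hs0 : sig = 0 := by
      funext g
      rw [hsig]
      simp [h0]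
    rw [hset, hs0]
    simp
end

section
/- Let F be an algebraically closed field of characteristic 2, let m ≥ 1, and let λ = (λ_1, …, λ_{2m+1}) ∈ F^{2m+1}. Then the set of maps { g ↦ ψ(g^{[2]}) − [g, ψ(g)] : ψ a derivation of h_m } is exactly the F-linear span of the maps λ_{2m+1}·ρ_{2m+1} and ρ_1, …, ρ_{2m}, where ρ_i is defined by ρ_i(Σ_{k=1}^{2m+1} a_k e_k) = a_i² e_{2m+1}. In particular this set is a subspace of dimension 2m + 1 if λ_{2m+1} ≠ 0 and of dimension 2m if λ_{2m+1} = 0. -/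
theorem aux_lie_sum {F L : Type*} [Field F] [LieRing L] [LieAlgebra F L]
    {ι : Type*} (s : Finset ι) (x : L) (v : ι → L) :
    ⁅x, ∑ j ∈ s, v j⁆ = ∑ j ∈ s, ⁅x, v j⁆ :=
  map_sum (LieModule.toEnd F L L x) v s

section Aux2
variable {F : Type*} [Field F] {m : ℕ}
    {L : Type*} [LieRing L] [LieAlgebra F L]
    (b : Module.Basis (Fin (2*m+1)) F L)
    (hb : ∀ i j : Fin (2*m+1), ⁅b i, b j⁆ =
      if (j : ℕ) = (i : ℕ) + m ∧ (i : ℕ) < m then b (Fin.last (2*m))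
      else if (i : ℕ) = (j : ℕ) + m ∧ (j : ℕ) < m then - b (Fin.last (2*m))
      else 0)

theorem aux_repr_z' (c : F) (i : Fin (2*m+1)) (hi : (i:ℕ) < 2*m) :
    b.repr (c • b (Fin.last (2*m))) i = 0 := by
  rw [map_smul, Finsupp.smul_apply, Module.Basis.repr_self, Finsupp.single_apply,
    if_neg (fun he => by have := congrArg Fin.val he; simp [Fin.val_last] at this; omega)]
  simp

include hb

theorem aux_bracket' (x y : L) :
    ⁅x, y⁆ = (∑ j : Fin m, (b.repr x ⟨(j:ℕ), by omega⟩ * b.repr y ⟨m+(j:ℕ), by have := j.isLt; omega⟩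
        - b.repr x ⟨m+(j:ℕ), by have := j.isLt; omega⟩ * b.repr y ⟨(j:ℕ), by omega⟩)) • b (Fin.last (2*m)) := by
  set B2 : L →ₗ[F] L →ₗ[F] L := LinearMap.mk₂ F
    (fun x y => (∑ j : Fin m, (b.repr x ⟨(j:ℕ), by omega⟩ * b.repr y ⟨m+(j:ℕ), by have := j.isLt; omega⟩
        - b.repr x ⟨m+(j:ℕ), by have := j.isLt; omega⟩ * b.repr y ⟨(j:ℕ), by omega⟩)) • b (Fin.last (2*m)))
    (fun x x' y => by
      beta_reduce
      rw [← add_smul, ← Finset.sum_add_distrib]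
      congr 1
      refine Finset.sum_congr rfl fun j _ => ?_
      simp only [map_add, Finsupp.add_apply]; ring)
    (fun c x y => by
      beta_reduce
      rw [smul_smul]
      congr 1
      rw [Finset.mul_sum]
      refine Finset.sum_congr rfl fun j _ => ?_
      simp only [map_smul, Finsupp.smul_apply, smul_eq_mul]; ring)
    (fun x y y' => by
      beta_reduce
      rw [← add_smul, ← Finset.sum_add_distrib]
      congr 1
      refine Finset.sum_congr rfl fun j _ => ?_
      simp only [map_add, Finsupp.add_apply]; ring)
    (fun c x y => by
      beta_reduce
      rw [smul_smul]
      congr 1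
      rw [Finset.mul_sum]
      refine Finset.sum_congr rfl fun j _ => ?_
      simp only [map_smul, Finsupp.smul_apply, smul_eq_mul]; ring) with hB2
  have key : (LinearMap.mk₂ F (fun x y : L => ⁅x, y⁆) add_lie smul_lie lie_add lie_smul) = B2 := by
    apply LinearMap.ext_basis b b
    intro i k
    have h0 : (LinearMap.mk₂ F (fun x y : L => ⁅x, y⁆) add_lie smul_lie lie_add lie_smul) (b i) (b k) = ⁅b i, b k⁆ := rfl
    rw [h0, hb, hB2]
    simp only [LinearMap.mk₂_apply, Module.Basis.repr_self, Finsupp.single_apply, Fin.ext_iff]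
    by_cases h1 : (k : ℕ) = (i : ℕ) + m ∧ (i : ℕ) < m
    · rw [if_pos h1]
      have hs : (∑ j : Fin m,
          ((if (i:ℕ) = (j:ℕ) then (1:F) else 0) * (if (k:ℕ) = m + (j:ℕ) then 1 else 0)
          - (if (i:ℕ) = m + (j:ℕ) then 1 else 0) * (if (k:ℕ) = (j:ℕ) then 1 else 0))) = 1 := by
        rw [Finset.sum_eq_single (⟨(i:ℕ), h1.2⟩ : Fin m)]
        · rw [if_pos (show (i:ℕ) = ((⟨(i:ℕ), h1.2⟩ : Fin m):ℕ) by simp),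
            if_pos (show (k:ℕ) = m + ((⟨(i:ℕ), h1.2⟩ : Fin m):ℕ) by simp; omega),
            if_neg (show ¬ (i:ℕ) = m + ((⟨(i:ℕ), h1.2⟩ : Fin m):ℕ) by simp; omega),
            if_neg (show ¬ (k:ℕ) = ((⟨(i:ℕ), h1.2⟩ : Fin m):ℕ) by simp; omega)]
          ring
        · intro j _ hj
          have hjm : (j:ℕ) < m := j.isLt
          have hji : (j:ℕ) ≠ (i:ℕ) := by
            intro he; apply hj; apply Fin.ext; simpa using he
          rw [if_neg (show ¬ (i:ℕ) = (j:ℕ) by omega),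
            if_neg (show ¬ (i:ℕ) = m + (j:ℕ) by omega)]
          ring
        · simp
      rw [hs, one_smul]
    · rw [if_neg h1]
      by_cases h2 : (i : ℕ) = (k : ℕ) + m ∧ (k : ℕ) < m
      · rw [if_pos h2]
        have hs : (∑ j : Fin m,
            ((if (i:ℕ) = (j:ℕ) then (1:F) else 0) * (if (k:ℕ) = m + (j:ℕ) then 1 else 0)
            - (if (i:ℕ) = m + (j:ℕ) then 1 else 0) * (if (k:ℕ) = (j:ℕ) then 1 else 0))) = -1 := by
          rw [Finset.sum_eq_single (⟨(k:ℕ), h2.2⟩ : Fin m)]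
          · rw [if_neg (show ¬ (i:ℕ) = ((⟨(k:ℕ), h2.2⟩ : Fin m):ℕ) by simp; omega),
              if_pos (show (i:ℕ) = m + ((⟨(k:ℕ), h2.2⟩ : Fin m):ℕ) by simp; omega),
              if_pos (show (k:ℕ) = ((⟨(k:ℕ), h2.2⟩ : Fin m):ℕ) by simp)]
            ring
          · intro j _ hj
            have hjm : (j:ℕ) < m := j.isLt
            have hji : (j:ℕ) ≠ (k:ℕ) := by
              intro he; apply hj; apply Fin.ext; simpa using he
            by_cases e1 : (i:ℕ) = (j:ℕ)
            · rw [if_pos e1, if_neg (show ¬ (k:ℕ) = m + (j:ℕ) by omega),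
                if_neg (show ¬ (i:ℕ) = m + (j:ℕ) by omega)]
              ring
            · rw [if_neg e1, if_neg (show ¬ (k:ℕ) = (j:ℕ) by omega)]
              ring
          · simp
        rw [hs, neg_one_smul]
      · rw [if_neg h2]
        have hs : (∑ j : Fin m,
            ((if (i:ℕ) = (j:ℕ) then (1:F) else 0) * (if (k:ℕ) = m + (j:ℕ) then 1 else 0)
            - (if (i:ℕ) = m + (j:ℕ) then 1 else 0) * (if (k:ℕ) = (j:ℕ) then 1 else 0))) = 0 := by
          apply Finset.sum_eq_zero
          intro j _
          have hjm : (j:ℕ) < m := j.isLt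
          by_cases e1 : (i:ℕ) = (j:ℕ)
          · rw [if_pos e1, if_neg (show ¬ (k:ℕ) = m + (j:ℕ) by omega),
              if_neg (show ¬ (i:ℕ) = m + (j:ℕ) by omega)]
            ring
          · rw [if_neg e1]
            by_cases e2 : (i:ℕ) = m + (j:ℕ)
            · rw [if_pos e2, if_neg (show ¬ (k:ℕ) = (j:ℕ) by omega)]
              ring
            · rw [if_neg e2]; ring
        rw [hs, zero_smul]
  have h1 : ⁅x, y⁆ = B2 x y := by
    have : (LinearMap.mk₂ F (fun x y : L => ⁅x, y⁆) add_lie smul_lie lie_add lie_smul) x y = ⁅x, y⁆ := rfl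
    rw [← this, key]
  rw [h1, hB2]
  rfl

theorem aux_brkt_r' (x : L) (j : Fin m) :
    ⁅x, b ⟨m+(j:ℕ), by have := j.isLt; omega⟩⁆ = b.repr x ⟨(j:ℕ), by omega⟩ • b (Fin.last (2*m)) := by
  rw [aux_bracket' b hb]
  congr 1
  rw [Finset.sum_eq_single j]
  · have hj := j.isLt
    rw [Module.Basis.repr_self]
    simp only [Finsupp.single_apply, Fin.ext_iff, Fin.val_mk]
    split_ifs <;> first | ring1 | (exfalso; omega)
  · intro j' _ hj'
    have : (j':ℕ) ≠ (j:ℕ) := fun he => hj' (Fin.ext he)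
    have hj := j.isLt
    have hj'2 := j'.isLt
    rw [Module.Basis.repr_self]
    simp only [Finsupp.single_apply, Fin.ext_iff, Fin.val_mk]
    split_ifs <;> first | ring1 | (exfalso; omega)
  · simp


theorem aux_brkt_l' (x : L) (j : Fin m) :
    ⁅x, b ⟨(j:ℕ), by omega⟩⁆ = - (b.repr x ⟨m+(j:ℕ), by have := j.isLt; omega⟩ • b (Fin.last (2*m))) := by
  rw [aux_bracket' b hb, ← neg_smul]
  congr 1
  rw [Finset.sum_eq_single j]
  · have hj := j.isLt
    rw [Module.Basis.repr_self]
    simp only [Finsupp.single_apply, Fin.ext_iff, Fin.val_mk]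
    split_ifs <;> first | ring1 | (exfalso; omega)
  · intro j' _ hj'
    have : (j':ℕ) ≠ (j:ℕ) := fun he => hj' (Fin.ext he)
    have hj := j.isLt
    have hj'2 := j'.isLt
    rw [Module.Basis.repr_self]
    simp only [Finsupp.single_apply, Fin.ext_iff, Fin.val_mk]
    split_ifs <;> first | ring1 | (exfalso; omega)
  · simp


theorem aux_brkt_z' (x : L) : ⁅x, b (Fin.last (2*m))⁆ = 0 := by
  rw [aux_bracket' b hb]
  convert zero_smul F _
  apply Finset.sum_eq_zero
  intro j _
  have hj := j.isLt
  rw [Module.Basis.repr_self]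
  simp only [Finsupp.single_apply, Fin.ext_iff, Fin.val_mk, Fin.val_last]
  split_ifs <;> first | ring1 | (exfalso; omega)

theorem aux_der1 (j : Fin m) :
    ∃ ψ : LieDerivation F L L, ∀ u : L,
      ψ u = b.repr u ⟨(j:ℕ), by omega⟩ • b ⟨m+(j:ℕ), by have := j.isLt; omega⟩ := by
  refine ⟨⟨(b.coord ⟨(j:ℕ), by omega⟩).smulRight (b ⟨m+(j:ℕ), by have := j.isLt; omega⟩), fun x y => ?_⟩,
    fun u => rfl⟩
  simp only [LinearMap.smulRight_apply, Module.Basis.coord_apply]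
  have hrz : b.repr ((∑ j' : Fin m, (b.repr x ⟨(j':ℕ), by omega⟩ * b.repr y ⟨m+(j':ℕ), by have := j'.isLt; omega⟩
        - b.repr x ⟨m+(j':ℕ), by have := j'.isLt; omega⟩ * b.repr y ⟨(j':ℕ), by omega⟩)) • b (Fin.last (2*m)))
      (⟨(j:ℕ), by omega⟩ : Fin (2*m+1)) = 0 :=
    aux_repr_z' b _ _ (by have := j.isLt; simp; omega)
  rw [aux_bracket' b hb x y, hrz, zero_smul, lie_smul, lie_smul,
    aux_brkt_r' b hb x j, aux_brkt_r' b hb y j,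
    smul_smul, smul_smul, mul_comm]
  abel

theorem aux_der2 (j : Fin m) :
    ∃ ψ : LieDerivation F L L, ∀ u : L,
      ψ u = b.repr u ⟨m+(j:ℕ), by have := j.isLt; omega⟩ • b ⟨(j:ℕ), by omega⟩ := by
  refine ⟨⟨(b.coord ⟨m+(j:ℕ), by have := j.isLt; omega⟩).smulRight (b ⟨(j:ℕ), by omega⟩), fun x y => ?_⟩,
    fun u => rfl⟩
  simp only [LinearMap.smulRight_apply, Module.Basis.coord_apply]
  have hrz : b.repr ((∑ j' : Fin m, (b.repr x ⟨(j':ℕ), by omega⟩ * b.repr y ⟨m+(j':ℕ), by have := j'.isLt; omega⟩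
        - b.repr x ⟨m+(j':ℕ), by have := j'.isLt; omega⟩ * b.repr y ⟨(j':ℕ), by omega⟩)) • b (Fin.last (2*m)))
      (⟨m+(j:ℕ), by have := j.isLt; omega⟩ : Fin (2*m+1)) = 0 :=
    aux_repr_z' b _ _ (by have := j.isLt; simp; omega)
  rw [aux_bracket' b hb x y, hrz, zero_smul, lie_smul, lie_smul,
    aux_brkt_l' b hb x j, aux_brkt_l' b hb y j]
  rw [smul_neg, smul_neg, smul_smul, smul_smul, mul_comm]
  abel
theorem aux_der3 :
    ∃ ψ : LieDerivation F L L, ∀ u : L,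
      ψ u = (∑ j : Fin m, b.repr u ⟨m+(j:ℕ), by have := j.isLt; omega⟩ • b ⟨m+(j:ℕ), by have := j.isLt; omega⟩)
        + b.repr u (Fin.last (2*m)) • b (Fin.last (2*m)) := by
  set ψ₀ : L →ₗ[F] L :=
    (∑ j : Fin m, (b.coord ⟨m+(j:ℕ), by have := j.isLt; omega⟩).smulRight (b ⟨m+(j:ℕ), by have := j.isLt; omega⟩))
      + (b.coord (Fin.last (2*m))).smulRight (b (Fin.last (2*m))) with hψ₀
  have happ : ∀ u : L, ψ₀ u = (∑ j : Fin m, b.repr u ⟨m+(j:ℕ), by have := j.isLt; omega⟩ • b ⟨m+(j:ℕ), by have := j.isLt; omega⟩)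
      + b.repr u (Fin.last (2*m)) • b (Fin.last (2*m)) := by
    intro u
    rw [hψ₀]
    simp [LinearMap.sum_apply]
  refine ⟨⟨ψ₀, fun x y => ?_⟩, happ⟩
  show ψ₀ ⁅x, y⁆ = ⁅x, ψ₀ y⁆ - ⁅y, ψ₀ x⁆
  rw [happ ⁅x,y⁆, happ x, happ y, aux_bracket' b hb x y]
  have h1 : (∑ j : Fin m, b.repr ((∑ j' : Fin m,
      (b.repr x ⟨(j':ℕ), by omega⟩ * b.repr y ⟨m+(j':ℕ), by have := j'.isLt; omega⟩
        - b.repr x ⟨m+(j':ℕ), by have := j'.isLt; omega⟩ * b.repr y ⟨(j':ℕ), by omega⟩)) • b (Fin.last (2*m)))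
      ⟨m+(j:ℕ), by have := j.isLt; omega⟩ • b (⟨m+(j:ℕ), by have := j.isLt; omega⟩ : Fin (2*m+1))) = 0 := by
    apply Finset.sum_eq_zero
    intro j _
    rw [aux_repr_z' b _ _ (by have := j.isLt; simp; omega), zero_smul]
  have h2 : b.repr ((∑ j' : Fin m,
      (b.repr x ⟨(j':ℕ), by omega⟩ * b.repr y ⟨m+(j':ℕ), by have := j'.isLt; omega⟩
        - b.repr x ⟨m+(j':ℕ), by have := j'.isLt; omega⟩ * b.repr y ⟨(j':ℕ), by omega⟩)) • b (Fin.last (2*m)))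
      (Fin.last (2*m)) = ∑ j' : Fin m,
      (b.repr x ⟨(j':ℕ), by omega⟩ * b.repr y ⟨m+(j':ℕ), by have := j'.isLt; omega⟩
        - b.repr x ⟨m+(j':ℕ), by have := j'.isLt; omega⟩ * b.repr y ⟨(j':ℕ), by omega⟩) := by
    rw [map_smul, Finsupp.smul_apply, Module.Basis.repr_self, Finsupp.single_apply, if_pos rfl]
    simp
  rw [h1, h2, zero_add, lie_add, lie_add, aux_lie_sum (F := F), aux_lie_sum (F := F),
    lie_smul, lie_smul, aux_brkt_z' b hb x, aux_brkt_z' b hb y, smul_zero, smul_zero,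
    add_zero, add_zero]
  have h3 : ∀ u v : L, (∑ j : Fin m, ⁅u, b.repr v ⟨m+(j:ℕ), by have := j.isLt; omega⟩ • b ⟨m+(j:ℕ), by have := j.isLt; omega⟩⁆)
      = (∑ j : Fin m, (b.repr v ⟨m+(j:ℕ), by have := j.isLt; omega⟩ * b.repr u ⟨(j:ℕ), by omega⟩))
        • b (Fin.last (2*m)) := by
    intro u v
    rw [Finset.sum_smul]
    refine Finset.sum_congr rfl fun j _ => ?_
    rw [lie_smul, aux_brkt_r' b hb u j, smul_smul]
  rw [h3 x y, h3 y x, ← sub_smul, ← Finset.sum_sub_distrib]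
  congr 1
  refine Finset.sum_congr rfl fun j _ => ?_
  ring

end Aux2

set_option maxHeartbeats 2000000 in
/-- Let `F` be an algebraically closed field of characteristic `2`, let
`m ≥ 1`, and let `λ ∈ F^{2m+1}`, with associated `[2]`-map
`g^{[2]} = (Σ_i a_i² λ_i + Σ_{j=1}^m a_j a_{m+j}) e_{2m+1}` for `g = Σ_i a_i e_i`.  Then the
set of maps `{ g ↦ ψ(g^{[2]}) − [g, ψ(g)] : ψ a derivation of h_m }` is exactly the
`F`-linear span of the maps `λ_{2m+1}·ρ_{2m+1}` and `ρ_1, …, ρ_{2m}`, where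
`ρ_i(Σ_k a_k e_k) = a_i² e_{2m+1}`.  In particular this set is a subspace of dimension
`2m + 1` if `λ_{2m+1} ≠ 0` and of dimension `2m` if `λ_{2m+1} = 0`. -/
theorem heisenberg_ind1_image_char_two
    (F : Type*) [Field F] [IsAlgClosed F] [CharP F 2]
    (m : ℕ) (hm : 1 ≤ m)
    (L : Type*) [LieRing L] [LieAlgebra F L]
    (b : Module.Basis (Fin (2*m+1)) F L)
    (hb : ∀ i j : Fin (2*m+1), ⁅b i, b j⁆ =
      if (j : ℕ) = (i : ℕ) + m ∧ (i : ℕ) < m then b (Fin.last (2*m))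
      else if (i : ℕ) = (j : ℕ) + m ∧ (j : ℕ) < m then - b (Fin.last (2*m))
      else 0)
    (lam : Fin (2*m+1) → F)
    (P : L → L)
    (hP : ∀ g : L, P g =
      (∑ i, (b.repr g i)^2 * lam i +
        ∑ j : Fin m, b.repr g ⟨(j : ℕ), by omega⟩ * b.repr g ⟨m + (j : ℕ), by omega⟩) •
      b (Fin.last (2*m)))
    (rho : Fin (2*m+1) → (L → L))
    (hrho : ∀ (i : Fin (2*m+1)) (g : L), rho i g = (b.repr g i)^2 • b (Fin.last (2*m))) :
    {f : L → L | ∃ ψ : LieDerivation F L L, f = fun g => ψ (P g) - ⁅g, ψ g⁆} =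
      ↑(Submodule.span F
        (insert (lam (Fin.last (2*m)) • rho (Fin.last (2*m)))
          {f : L → L | ∃ i : Fin (2*m+1), (i : ℕ) < 2*m ∧ f = rho i})) ∧
    (lam (Fin.last (2*m)) ≠ 0 →
      Module.finrank F ↥(Submodule.span F
        (insert (lam (Fin.last (2*m)) • rho (Fin.last (2*m)))
          {f : L → L | ∃ i : Fin (2*m+1), (i : ℕ) < 2*m ∧ f = rho i})) = 2*m + 1) ∧
    (lam (Fin.last (2*m)) = 0 →
      Module.finrank F ↥(Submodule.span F
        (insert (lam (Fin.last (2*m)) • rho (Fin.last (2*m)))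
          {f : L → L | ∃ i : Fin (2*m+1), (i : ℕ) < 2*m ∧ f = rho i})) = 2*m) := by
  classical
  -- abbreviations
  set z := b (Fin.last (2*m)) with hzdef
  set S : Set (L → L) := insert (lam (Fin.last (2*m)) • rho (Fin.last (2*m)))
    {f : L → L | ∃ i : Fin (2*m+1), (i : ℕ) < 2*m ∧ f = rho i} with hSdef
  -- char two facts
  have h2F : (2:F) = 0 := CharP.cast_eq_zero F 2
  have hnegL : ∀ v : L, -v = v := by
    intro v
    have h2 : v + v = 0 := by
      rw [← two_smul F v, show (2:F) = 0 from CharP.cast_eq_zero F 2, zero_smul]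
    exact neg_eq_of_add_eq_zero_left h2
  -- the quadratic-form coefficient
  set C : L → F := fun g => ∑ i, (b.repr g i)^2 * lam i +
      ∑ j : Fin m, b.repr g ⟨(j : ℕ), by omega⟩ * b.repr g ⟨m + (j : ℕ), by omega⟩ with hCdef
  have hPC : ∀ g : L, P g = C g • z := hP
  -- the symplectic form
  set Bv : L → L → F := fun x y => ∑ j : Fin m,
      (b.repr x ⟨(j:ℕ), by omega⟩ * b.repr y ⟨m+(j:ℕ), by omega⟩
        - b.repr x ⟨m+(j:ℕ), by omega⟩ * b.repr y ⟨(j:ℕ), by omega⟩) with hBvdef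
  have hkey : ∀ x y : L, ⁅x, y⁆ = Bv x y • z := fun x y => aux_bracket' b hb x y
  -- the linear map ψ ↦ (g ↦ ψ (P g) - ⁅g, ψ g⁆)
  set T : LieDerivation F L L →ₗ[F] (L → L) :=
    { toFun := fun ψ => fun g => ψ (P g) - ⁅g, ψ g⁆
      map_add' := by
        intro ψ φ
        funext g
        simp only [LieDerivation.add_apply, lie_add, Pi.add_apply]
        abel
      map_smul' := by
        intro c ψ
        funext g
        simp only [LieDerivation.smul_apply, lie_smul, RingHom.id_apply, Pi.smul_apply,
          smul_sub] } with hTdef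
  have hTapp : ∀ (ψ : LieDerivation F L L) (g : L), T ψ g = ψ (P g) - ⁅g, ψ g⁆ := fun _ _ => rfl
  have hsetT : {f : L → L | ∃ ψ : LieDerivation F L L, f = fun g => ψ (P g) - ⁅g, ψ g⁆} =
      ↑(LinearMap.range T) := by
    ext f
    constructor
    · rintro ⟨ψ, rfl⟩; exact ⟨ψ, rfl⟩
    · rintro ⟨ψ, rfl⟩; exact ⟨ψ, rfl⟩
  -- quadratic-form facts
  have hCadd : ∀ u v : L, C (u + v) = C u + C v + Bv u v := by
    intro u v
    have e1 : (∑ i, (b.repr (u+v) i)^2 * lam i)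
        = (∑ i, (b.repr u i)^2 * lam i) + ∑ i, (b.repr v i)^2 * lam i := by
      rw [← Finset.sum_add_distrib]
      refine Finset.sum_congr rfl fun i _ => ?_
      rw [map_add, Finsupp.add_apply, CharTwo.add_sq]
      ring
    have e2 : (∑ j : Fin m, b.repr (u+v) ⟨(j : ℕ), by omega⟩ * b.repr (u+v) ⟨m + (j : ℕ), by omega⟩)
        = (∑ j : Fin m, b.repr u ⟨(j : ℕ), by omega⟩ * b.repr u ⟨m + (j : ℕ), by omega⟩)
          + (∑ j : Fin m, b.repr v ⟨(j : ℕ), by omega⟩ * b.repr v ⟨m + (j : ℕ), by omega⟩)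
          + Bv u v := by
      rw [hBvdef, ← Finset.sum_add_distrib, ← Finset.sum_add_distrib]
      refine Finset.sum_congr rfl fun j _ => ?_
      rw [map_add, Finsupp.add_apply, Finsupp.add_apply]
      linear_combination (b.repr u ⟨m + (j:ℕ), by omega⟩ * b.repr v ⟨(j:ℕ), by omega⟩) * h2F
    rw [hCdef]
    simp only
    rw [e1, e2]
    rw [hBvdef]
    ring
  have hCsmul : ∀ (a : F) (u : L), C (a • u) = a^2 * C u := by
    intro a u
    rw [hCdef]
    simp only [map_smul, Finsupp.smul_apply, smul_eq_mul]
    rw [mul_add, Finset.mul_sum, Finset.mul_sum]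
    congr 1 <;> exact Finset.sum_congr rfl fun i _ => by ring
  have hCb : ∀ i : Fin (2*m+1), C (b i) = lam i := by
    intro i
    rw [hCdef]
    simp only [Module.Basis.repr_self]
    have e1 : (∑ i', (Finsupp.single i (1:F) i')^2 * lam i') = lam i := by
      rw [Finset.sum_eq_single i]
      · rw [Finsupp.single_apply, if_pos rfl]; ring
      · intro i' _ hi'
        rw [Finsupp.single_apply, if_neg (Ne.symm hi')]; ring
      · simp
    have e2 : (∑ j : Fin m, Finsupp.single i (1:F) ⟨(j : ℕ), by omega⟩
        * Finsupp.single i (1:F) ⟨m + (j : ℕ), by omega⟩) = 0 := by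
      apply Finset.sum_eq_zero
      intro j _
      have hj := j.isLt
      simp only [Finsupp.single_apply, Fin.ext_iff, Fin.val_mk]
      split_ifs <;> first | ring1 | (exfalso; omega)
    rw [e1, e2, add_zero]
  -- Part A : the image of T lies in the span
  have hA : ∀ ψ : LieDerivation F L L, T ψ ∈ Submodule.span F S := by
    intro ψ
    -- ψ preserves the centre
    have hz0m : ⁅b ⟨0, by omega⟩, b ⟨m, by omega⟩⁆ = z := by
      rw [hb, if_pos]
      constructor
      · simp
      · show 0 < m; omega
    obtain ⟨μ, hμ⟩ : ∃ μ : F, ψ z = μ • z := by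
      refine ⟨Bv (b ⟨0, by omega⟩) (ψ (b ⟨m, by omega⟩))
        - Bv (b ⟨m, by omega⟩) (ψ (b ⟨0, by omega⟩)), ?_⟩
      rw [← hz0m, ψ.apply_lie_eq_sub, hkey, hkey, ← sub_smul, hz0m]
    -- additivity of T ψ
    have hadd : ∀ u v : L, T ψ (u + v) = T ψ u + T ψ v := by
      intro u v
      have hcross : ⁅u, ψ v⁆ + ⁅v, ψ u⁆ = Bv u v • ψ z := by
        have h := ψ.apply_lie_eq_sub u v
        rw [hkey u v, map_smul, sub_eq_add_neg, hnegL] at h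
        exact h.symm
      rw [hTapp, hTapp, hTapp, hPC, hPC, hPC, hCadd]
      simp only [add_smul, map_add, map_smul, add_lie, lie_add]
      rw [← hcross]
      abel
    -- quadratic scaling of T ψ
    have hsmul : ∀ (a : F) (u : L), T ψ (a • u) = (a^2) • T ψ u := by
      intro a u
      have hbr : ⁅a • u, ψ (a • u)⁆ = (a^2) • ⁅u, ψ u⁆ := by
        rw [map_smul, smul_lie, lie_smul, smul_smul, ← pow_two]
      rw [hTapp, hTapp, hPC, hPC, hCsmul, hbr, mul_smul, map_smul, ← smul_sub]
    -- value on basis vectors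
    set α : Fin (2*m+1) → F := fun i => lam i * μ - Bv (b i) (ψ (b i)) with hαdef
    have hfb : ∀ i : Fin (2*m+1), T ψ (b i) = α i • z := by
      intro i
      rw [hTapp, hPC, hCb, map_smul, hμ, smul_smul, hkey (b i) (ψ (b i)), ← sub_smul]
    have hαlast : α (Fin.last (2*m)) = lam (Fin.last (2*m)) * μ := by
      have hBz : Bv z (ψ z) = 0 := by
        rw [hBvdef]
        apply Finset.sum_eq_zero
        intro j _
        have hj := j.isLt
        rw [hzdef, Module.Basis.repr_self]
        simp only [Finsupp.single_apply, Fin.ext_iff, Fin.val_mk, Fin.val_last]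
        split_ifs <;> first | ring1 | (exfalso; omega)
      rw [hαdef]
      simp only
      rw [← hzdef, hBz, sub_zero]
    -- T ψ as a sum of the rho maps
    have hsum : T ψ = ∑ i : Fin (2*m+1), α i • rho i := by
      funext g
      have hg := b.sum_repr g
      set A : L →+ L := AddMonoidHom.mk' (T ψ) hadd with hAdef
      have h1 : T ψ g = ∑ i : Fin (2*m+1), (b.repr g i)^2 • (α i • z) := by
        have : T ψ g = A (∑ i, b.repr g i • b i) := by rw [hg]; rfl
        rw [this, map_sum]
        refine Finset.sum_congr rfl fun i _ => ?_
        show T ψ (b.repr g i • b i) = _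
        rw [hsmul, hfb]
      rw [h1, Finset.sum_apply]
      refine Finset.sum_congr rfl fun i _ => ?_
      rw [Pi.smul_apply, hrho, smul_smul, smul_smul, mul_comm]
    rw [hsum, Fin.sum_univ_castSucc]
    apply Submodule.add_mem
    · apply Submodule.sum_mem
      intro i _
      apply Submodule.smul_mem
      apply Submodule.subset_span
      rw [hSdef]
      right
      exact ⟨i.castSucc, by simpa using i.isLt, rfl⟩
    · rw [hαlast, mul_comm, mul_smul]
      apply Submodule.smul_mem
      exact Submodule.subset_span (by rw [hSdef]; left; rfl)
  -- Part B : generators are in the range of T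
  have hrange : ∀ i : Fin (2*m+1), (i:ℕ) < 2*m → rho i ∈ LinearMap.range T := by
    intro i hi
    by_cases him : (i:ℕ) < m
    · obtain ⟨ψ, hψ⟩ := aux_der1 b hb ⟨(i:ℕ), him⟩
      refine ⟨ψ, ?_⟩
      funext g
      rw [hTapp, hψ (P g), hψ g, hPC, aux_repr_z' b (C g) _ (by simp; omega), zero_smul,
        zero_sub, lie_smul, aux_brkt_r' b hb g ⟨(i:ℕ), him⟩, smul_smul, hnegL, hrho, pow_two]
    · obtain ⟨ψ, hψ⟩ := aux_der2 b hb ⟨(i:ℕ) - m, by omega⟩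
      refine ⟨ψ, ?_⟩
      funext g
      have hir : (⟨m + ((⟨(i:ℕ)-m, by omega⟩ : Fin m) : ℕ), by omega⟩ : Fin (2*m+1)) = i := by
        apply Fin.ext; simp; omega
      rw [hTapp, hψ (P g), hψ g, hPC, hir, aux_repr_z' b (C g) i hi, zero_smul,
        zero_sub, lie_smul, aux_brkt_l' b hb g ⟨(i:ℕ)-m, by omega⟩, hir, smul_neg, neg_neg,
        smul_smul, hrho, pow_two]
  -- the diagonal derivation
  obtain ⟨ψ₁, hψ₁⟩ := aux_der3 b hb
  have hψz : ψ₁ z = z := by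
    rw [hψ₁]
    have hterm : ∀ j : Fin m, b.repr z ⟨m+(j:ℕ), by omega⟩ • b ⟨m+(j:ℕ), by omega⟩ = (0:L) := by
      intro j
      have hj := j.isLt
      rw [hzdef, Module.Basis.repr_self, Finsupp.single_apply, if_neg, zero_smul]
      intro he
      have := congrArg Fin.val he
      simp [Fin.val_last] at this
      omega
    rw [Finset.sum_eq_zero (fun j _ => hterm j), zero_add, hzdef, Module.Basis.repr_self,
      Finsupp.single_apply, if_pos rfl, one_smul]
  have hT1 : T ψ₁ = ∑ i : Fin (2*m+1), lam i • rho i := by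
    funext g
    rw [hTapp, hPC, map_smul, hψz]
    have hbr : ⁅g, ψ₁ g⁆ = (∑ j : Fin m,
        b.repr g ⟨(j:ℕ), by omega⟩ * b.repr g ⟨m+(j:ℕ), by omega⟩) • z := by
      rw [hψ₁ g, lie_add, aux_lie_sum (F := F), lie_smul, aux_brkt_z' b hb, smul_zero, add_zero,
        Finset.sum_smul]
      refine Finset.sum_congr rfl fun j _ => ?_
      rw [lie_smul, aux_brkt_r' b hb g j, smul_smul, mul_comm]
    rw [hbr, ← sub_smul, hCdef]
    simp only
    rw [add_sub_cancel_right, Finset.sum_apply, Finset.sum_smul]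
    refine Finset.sum_congr rfl fun i _ => ?_
    rw [Pi.smul_apply, hrho, smul_smul, mul_comm]
  have hBmem : S ⊆ ↑(LinearMap.range T) := by
    intro f hf
    rcases Set.mem_insert_iff.mp hf with rfl | ⟨i, hi, rfl⟩
    · have hdecomp : lam (Fin.last (2*m)) • rho (Fin.last (2*m))
          = T ψ₁ - ∑ i : Fin (2*m), lam i.castSucc • rho i.castSucc := by
        rw [hT1, Fin.sum_univ_castSucc, add_sub_cancel_left]
      rw [hdecomp]
      apply Submodule.sub_mem
      · exact LinearMap.mem_range_self T ψ₁
      · exact Submodule.sum_mem _ fun i _ =>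
          Submodule.smul_mem _ _ (hrange i.castSucc (by simpa using i.isLt))
    · exact hrange i hi
  have hrangeT : LinearMap.range T = Submodule.span F S := by
    apply le_antisymm
    · rintro f ⟨ψ, rfl⟩; exact hA ψ
    · rw [Submodule.span_le]; exact hBmem
  -- linear independence of the rho maps
  have hz0 : z ≠ 0 := b.ne_zero _
  have hindep : LinearIndependent F rho := by
    rw [linearIndependent_iff']
    intro s g hg i hi
    have hgb := congrFun hg (b i)
    rw [Finset.sum_apply] at hgb
    simp only [Pi.smul_apply, Pi.zero_apply] at hgb
    have he : ∀ i' ∈ s, g i' • rho i' (b i) = if i' = i then g i' • z else 0 := by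
      intro i' _
      rw [hrho, Module.Basis.repr_self, Finsupp.single_apply]
      by_cases h : i' = i
      · subst h; rw [if_pos rfl, if_pos rfl]; norm_num
      · rw [if_neg (Ne.symm h), if_neg h]
        norm_num
    rw [Finset.sum_congr rfl he, Finset.sum_ite_eq' s i (fun i' => g i' • z), if_pos hi] at hgb
    exact (smul_eq_zero.mp hgb).resolve_right hz0
  refine ⟨by rw [hsetT, hrangeT], ?_, ?_⟩
  · intro hlam
    have hspan : Submodule.span F S = Submodule.span F (Set.range rho) := by
      apply le_antisymm
      · rw [Submodule.span_le]
        intro f hf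
        rcases Set.mem_insert_iff.mp hf with rfl | ⟨i, _, rfl⟩
        · exact Submodule.smul_mem _ _ (Submodule.subset_span ⟨_, rfl⟩)
        · exact Submodule.subset_span ⟨i, rfl⟩
      · rw [Submodule.span_le]
        rintro f ⟨i, rfl⟩
        by_cases hi : (i:ℕ) < 2*m
        · exact Submodule.subset_span (Set.mem_insert_iff.mpr (Or.inr ⟨i, hi, rfl⟩))
        · have hieq : i = Fin.last (2*m) := by
            apply Fin.ext
            have := i.isLt
            simp only [Fin.val_last]
            omega
          subst hieq
          have hre : rho (Fin.last (2*m)) = (lam (Fin.last (2*m)))⁻¹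
              • (lam (Fin.last (2*m)) • rho (Fin.last (2*m))) := by
            rw [smul_smul, inv_mul_cancel₀ hlam, one_smul]
          rw [hre]
          exact Submodule.smul_mem _ _ (Submodule.subset_span (Set.mem_insert _ _))
    rw [hspan, finrank_span_eq_card hindep, Fintype.card_fin]
  · intro hlam
    have h0 : lam (Fin.last (2*m)) • rho (Fin.last (2*m)) = 0 := by rw [hlam, zero_smul]
    have hspan : Submodule.span F S
        = Submodule.span F (Set.range (rho ∘ Fin.castSucc)) := by
      rw [hSdef, h0, Submodule.span_insert_zero]
      congr 1
      ext f
      constructor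
      · rintro ⟨i, hi, rfl⟩
        exact ⟨⟨(i:ℕ), hi⟩, congrArg rho (Fin.ext (by simp))⟩
      · rintro ⟨i, rfl⟩
        exact ⟨i.castSucc, by simpa using i.isLt, rfl⟩
    rw [hspan,
      finrank_span_eq_card (hindep.comp Fin.castSucc (Fin.castSucc_injective _)),
      Fintype.card_fin]
end

section
/- Let F be a field of characteristic p > 2, let m ≥ 1, and let λ = (λ_1, …, λ_{2m+1}) ∈ F^{2m+1}. Define the map g ↦ g^{[p]} on the Heisenberg Lie algebra h_m by g^{[p]} = (Σ_{i=1}^{2m+1} a_i^p λ_i) e_{2m+1} for g = Σ_{i=1}^{2m+1} a_i e_i. Then this map satisfies the axioms of a restricted Lie algebra structure on h_m: (a·g)^{[p]} = a^p g^{[p]} for all a ∈ F and g ∈ h_m; (g+h)^{[p]} = g^{[p]} + h^{[p]} for all g,h ∈ h_m (the Jacobson correction terms vanish because h_m is 2-step nilpotent and p ≥ 3); and ad(g^{[p]}) = (ad g)^p = 0 for all g ∈ h_m, where ad(x) is the map y ↦ [x,y]. -/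
/-- Let `F` be a field of characteristic `p > 2`, let `m ≥ 1`, and let
`λ ∈ F^{2m+1}`.  Define `g^{[p]} = (Σ_i a_i^p λ_i) e_{2m+1}` for `g = Σ_i a_i e_i` in the
Heisenberg Lie algebra `h_m`.  Then this map satisfies the axioms of a restricted Lie
algebra structure on `h_m`: `(a•g)^{[p]} = a^p g^{[p]}`, `(g+h)^{[p]} = g^{[p]} + h^{[p]}`
(the Jacobson correction terms vanish), and `ad(g^{[p]}) = (ad g)^p = 0` for all `g`. -/
theorem heisenberg_restricted_structure_p_gt_two
    (F : Type*) [Field F] (p : ℕ) [CharP F p] (hp : p.Prime) (hp2 : 2 < p)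
    (m : ℕ) (hm : 1 ≤ m)
    (L : Type*) [LieRing L] [LieAlgebra F L]
    (b : Module.Basis (Fin (2*m+1)) F L)
    (hb : ∀ i j : Fin (2*m+1), ⁅b i, b j⁆ =
      if (j : ℕ) = (i : ℕ) + m ∧ (i : ℕ) < m then b (Fin.last (2*m))
      else if (i : ℕ) = (j : ℕ) + m ∧ (j : ℕ) < m then - b (Fin.last (2*m))
      else 0)
    (lam : Fin (2*m+1) → F)
    (P : L → L)
    (hP : ∀ g : L, P g = (∑ i, (b.repr g i)^p * lam i) • b (Fin.last (2*m))) :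
    (∀ (a : F) (g : L), P (a • g) = a^p • P g) ∧
    (∀ g h : L, P (g + h) = P g + P h) ∧
    (∀ g : L, LieAlgebra.ad F L (P g) = 0 ∧ (LieAlgebra.ad F L g)^p = 0) := by
  haveI := Fact.mk hp
  haveI : ExpChar F p := ExpChar.prime hp
  have lsum : ∀ (y : L) (f : Fin (2*m+1) → L), ⁅y, ∑ i, f i⁆ = ∑ i, ⁅y, f i⁆ := fun y f => by
    simpa only [LieAlgebra.ad_apply] using map_sum (LieAlgebra.ad F L y) f Finset.univ
  have slie : ∀ (y : L) (f : Fin (2*m+1) → L), ⁅∑ i, f i, y⁆ = ∑ i, ⁅f i, y⁆ := fun y f => by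
    rw [← lie_skew, lsum, ← Finset.sum_neg_distrib]
    exact Finset.sum_congr rfl fun i _ => lie_skew _ _
  -- The basis vector e := b (Fin.last (2*m)) is central.
  have hA : ∀ i : Fin (2*m+1), ⁅b i, b (Fin.last (2*m))⁆ = 0 := by
    intro i
    rw [hb]
    have h1 : ¬ ((Fin.last (2*m) : ℕ) = (i : ℕ) + m ∧ (i : ℕ) < m) := by
      simp only [Fin.val_last]; omega
    have h2 : ¬ ((i : ℕ) = (Fin.last (2*m) : ℕ) + m ∧ (Fin.last (2*m) : ℕ) < m) := by
      simp only [Fin.val_last]; omega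
    rw [if_neg h1, if_neg h2]
  have hR : ∀ x : L, ⁅x, b (Fin.last (2*m))⁆ = 0 := by
    intro x
    conv_lhs => rw [← b.sum_repr x]
    rw [slie]
    simp [smul_lie, hA]
  have hL0 : ∀ x : L, ⁅b (Fin.last (2*m)), x⁆ = 0 := by
    intro x
    rw [← lie_skew, hR, neg_zero]
  -- Every bracket lies in the span of the central element.
  have hS : ∀ x y : L, ∃ c : F, ⁅x, y⁆ = c • b (Fin.last (2*m)) := by
    intro x y
    have hmem : ⁅x, y⁆ ∈ Submodule.span F ({b (Fin.last (2*m))} : Set L) := by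
      rw [← b.sum_repr x, ← b.sum_repr y, slie]
      refine Submodule.sum_mem _ fun i _ => ?_
      rw [smul_lie, lsum]
      refine Submodule.smul_mem _ _ (Submodule.sum_mem _ fun j _ => ?_)
      rw [lie_smul]
      refine Submodule.smul_mem _ _ ?_
      rw [hb]
      split_ifs with h1 h2
      · exact Submodule.mem_span_singleton_self _
      · exact Submodule.neg_mem _ (Submodule.mem_span_singleton_self _)
      · exact Submodule.zero_mem _
    rcases Submodule.mem_span_singleton.mp hmem with ⟨c, hc⟩
    exact ⟨c, hc.symm⟩
  have had2 : ∀ g x y : L, ⁅g, ⁅x, y⁆⁆ = 0 := by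
    intro g x y
    obtain ⟨c, hc⟩ := hS x y
    rw [hc, lie_smul, hR, smul_zero]
  refine ⟨?_, ?_, ?_⟩
  · intro a g
    rw [hP, hP, smul_smul]
    congr 1
    rw [Finset.mul_sum]
    refine Finset.sum_congr rfl fun i _ => ?_
    rw [map_smul, Finsupp.smul_apply, smul_eq_mul, mul_pow, mul_assoc]
  · intro g h
    rw [hP, hP, hP, ← add_smul]
    congr 1
    rw [← Finset.sum_add_distrib]
    refine Finset.sum_congr rfl fun i _ => ?_
    rw [map_add, Finsupp.add_apply, add_pow_char, add_mul]
  · intro g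
    constructor
    · rw [hP]
      ext y
      simp only [LieAlgebra.ad_apply, LinearMap.zero_apply, smul_lie]
      rw [hL0, smul_zero]
    · have h2 : (LieAlgebra.ad F L g) ^ 2 = 0 := by
        ext y
        rw [pow_two, Module.End.mul_apply, LieAlgebra.ad_apply, LieAlgebra.ad_apply,
          LinearMap.zero_apply]
        exact had2 g g y
      obtain ⟨k, hk⟩ : ∃ k, p = k + 2 := ⟨p - 2, by omega⟩
      rw [hk, pow_add, h2, mul_zero]
end
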